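/- arXiv:0710.4245 — 9 statements merged into one kernel-verified Lean document; each statement's English description precedes it below -/
import Mathlib

section
/- Unbiasedness of the Poisson Estimator (conditional on the path): if κ has the Poisson distribution with mean λt for some λ > 0 and c ∈ ℝ is arbitrary, then E[ e^{(λ−c)t} · λ^{−κ} · ∏_{j=1}^{κ} (c − h(ψ_j)) ] = exp( −∫_0^t h(s) ds ). -/
open MeasureTheory ProbabilityTheory Real Finset

/-- Unbiasedness of the Poisson Estimator (conditional on the path): if `κ` is
Poisson with mean `λ t` and `c` is arbitrary, then
`E[ e^{(λ-c)t} λ^{-κ} ∏_{j=1}^{κ} (c - h(ψ_j)) ] = exp(-∫_0^t h(s) ds)`,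
where the `ψ_j` are i.i.d. uniform on `[0,t]`, independent of `κ`. -/
theorem poisson_estimator_unbiased
    {Ω : Type*} [MeasurableSpace Ω] (P : Measure Ω) [IsProbabilityMeasure P]
    (t : ℝ) (ht : 0 < t)
    (h : ℝ → ℝ) (hmeas : Measurable h)
    (Ch : ℝ) (hbd : ∀ s ∈ Set.Icc (0 : ℝ) t, |h s| ≤ Ch)
    (ψ : ℕ → Ω → ℝ) (hψmeas : ∀ j, Measurable (ψ j))
    (hψlaw : ∀ j, Measure.map (ψ j) P
      = (ENNReal.ofReal t)⁻¹ • volume.restrict (Set.Icc (0 : ℝ) t))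
    (hψindep : iIndepFun ψ P)
    (κ : Ω → ℕ) (hκmeas : Measurable κ)
    (hκψindep : IndepFun κ (fun ω => fun j => ψ j ω) P)
    (lam c : ℝ) (hlam : 0 < lam)
    (hκlaw : ∀ k : ℕ, P {ω | κ ω = k}
      = ENNReal.ofReal (Real.exp (-(lam * t)) * (lam * t) ^ k / Nat.factorial k)) :
    ∫ ω, Real.exp ((lam - c) * t) * (lam ^ κ ω)⁻¹
        * ∏ j ∈ Finset.range (κ ω), (c - h (ψ j ω)) ∂P
      = Real.exp (-∫ s in (0 : ℝ)..t, h s) := by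
  have hCh0 : 0 ≤ Ch := (abs_nonneg _).trans (hbd 0 ⟨le_refl 0, ht.le⟩)
  set B : ℝ := |c| + Ch with hB
  have hB0 : 0 ≤ B := add_nonneg (abs_nonneg c) hCh0
  set I : ℝ := ∫ s in (0:ℝ)..t, h s with hIdef
  set m : ℝ := c - I / t with hm
  set F : ℕ → Ω → ℝ := fun j ω => c - h (ψ j ω) with hF
  have hFmeas : ∀ j, Measurable (F j) :=
    fun j => measurable_const.sub (hmeas.comp (hψmeas j))
  -- a.e. membership of ψ j in [0,t]
  have hmem : ∀ᵐ ω ∂P, ∀ j, ψ j ω ∈ Set.Icc (0:ℝ) t := by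
    rw [ae_all_iff]
    intro j
    have h0 : P (ψ j ⁻¹' (Set.Icc (0:ℝ) t)ᶜ) = 0 := by
      rw [← Measure.map_apply (hψmeas j) measurableSet_Icc.compl, hψlaw j]
      simp [Measure.restrict_apply measurableSet_Icc.compl]
    have : ∀ᵐ ω ∂P, ω ∉ ψ j ⁻¹' (Set.Icc (0:ℝ) t)ᶜ :=
      measure_eq_zero_iff_ae_notMem.mp h0
    filter_upwards [this] with ω hω
    simpa using hω
  have hFbd : ∀ j, ∀ᵐ ω ∂P, ‖F j ω‖ ≤ B := by
    intro j
    filter_upwards [hmem] with ω hω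
    have := hbd (ψ j ω) (hω j)
    calc ‖F j ω‖ = |c - h (ψ j ω)| := rfl
      _ ≤ |c| + |h (ψ j ω)| := abs_sub _ _
      _ ≤ |c| + Ch := by linarith
  have hFint : ∀ j, Integrable (F j) P :=
    fun j => (integrable_const B).mono' (hFmeas j).aestronglyMeasurable (hFbd j)
  -- the mean of each factor
  haveI : IsFiniteMeasure (volume.restrict (Set.Icc (0:ℝ) t)) :=
    ⟨by rw [Measure.restrict_apply_univ]; simp [Real.volume_Icc]⟩
  have hImean : ∫ s in Set.Icc (0:ℝ) t, h s = I := by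
    rw [hIdef, intervalIntegral.integral_of_le ht.le, integral_Icc_eq_integral_Ioc]
  have hhint : IntegrableOn h (Set.Icc (0:ℝ) t) volume := by
    refine (integrable_const Ch).mono' hmeas.aestronglyMeasurable ?_
    filter_upwards [ae_restrict_mem measurableSet_Icc] with x hx
    simpa using hbd x hx
  have hmean : ∀ j, ∫ ω, F j ω ∂P = m := by
    intro j
    have h1 : ∫ ω, F j ω ∂P = ∫ x, (c - h x) ∂(Measure.map (ψ j) P) :=
      (integral_map (hψmeas j).aemeasurable
        (measurable_const.sub hmeas).aestronglyMeasurable).symm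
    rw [h1, hψlaw j, integral_smul_measure]
    have h2 : ∫ x in Set.Icc (0:ℝ) t, (c - h x) ∂volume = c * t - I := by
      rw [integral_sub (integrable_const c) hhint, setIntegral_const, hImean]
      simp [Real.volume_Icc, ht.le, ENNReal.toReal_ofReal, sub_zero]
      ring
    rw [h2, ENNReal.toReal_inv, ENNReal.toReal_ofReal ht.le, smul_eq_mul, hm]
    field_simp <;> ring
  -- independence of the factors and product formula
  have hFindep : iIndepFun F P :=
    hψindep.comp (fun _ x => c - h x) (fun _ => measurable_const.sub hmeas)
  have key : ∀ k, Integrable (fun ω => ∏ j ∈ Finset.range k, F j ω) P ∧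
      ∫ ω, ∏ j ∈ Finset.range k, F j ω ∂P = m ^ k := by
    intro k
    induction k with
    | zero => simp
    | succ n ih =>
      have hind : IndepFun (∏ j ∈ Finset.range n, F j) (F n) P :=
        hFindep.indepFun_prod_range_succ hFmeas n
      have hPfun : (∏ j ∈ Finset.range n, F j) = fun ω => ∏ j ∈ Finset.range n, F j ω := by
        funext ω; simp
      rw [hPfun] at hind
      have hint : Integrable ((fun ω => ∏ j ∈ Finset.range n, F j ω) * F n) P :=
        hind.integrable_mul ih.1 (hFint n)
      constructor
      · refine hint.congr (Filter.Eventually.of_forall fun ω => ?_)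
        simp [Finset.prod_range_succ]
      · have := hind.integral_mul_eq_mul_integral ih.1.aestronglyMeasurable (hFint n).aestronglyMeasurable
        have heq : ∫ ω, ∏ j ∈ Finset.range (n+1), F j ω ∂P
            = ∫ ω, ((fun ω => ∏ j ∈ Finset.range n, F j ω) * F n) ω ∂P := by
          refine integral_congr_ae (Filter.Eventually.of_forall fun ω => ?_)
          simp [Finset.prod_range_succ]
        rw [heq]
        calc ∫ ω, ((fun ω => ∏ j ∈ Finset.range n, F j ω) * F n) ω ∂P
            = (∫ ω, ∏ j ∈ Finset.range n, F j ω ∂P) * ∫ ω, F n ω ∂P := this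
          _ = m ^ n * m := by rw [ih.2, hmean n]
          _ = m ^ (n+1) := by ring
  -- the partition by values of κ
  set s : ℕ → Set Ω := fun k => κ ⁻¹' {k} with hs
  have hsm : ∀ k, MeasurableSet (s k) := fun k => hκmeas (measurableSet_singleton k)
  have hsd : Pairwise (Function.onFun Disjoint s) := by
    intro i j hij
    refine Set.disjoint_left.2 fun ω hi hj => hij ?_
    simp only [hs, Set.mem_preimage, Set.mem_singleton_iff] at hi hj
    rw [← hi, ← hj]
  have hsu : (⋃ k, s k) = Set.univ := by
    ext ω; simp [hs]
  have hpk : ∀ k, (P (s k)).toReal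
      = Real.exp (-(lam*t)) * (lam*t)^k / (Nat.factorial k) := by
    intro k
    have hset : s k = {ω | κ ω = k} := by ext ω; simp [hs]
    rw [hset, hκlaw k, ENNReal.toReal_ofReal]
    exact div_nonneg (mul_nonneg (Real.exp_pos _).le
      (pow_nonneg (by positivity) k)) (Nat.cast_nonneg _)
  -- the function and its value on each piece
  set f : Ω → ℝ := fun ω => Real.exp ((lam - c) * t) * (lam ^ κ ω)⁻¹
      * ∏ j ∈ Finset.range (κ ω), (c - h (ψ j ω)) with hfdef
  set g : ℕ → Ω → ℝ := fun k ω => Real.exp ((lam - c) * t) * (lam ^ k)⁻¹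
      * ∏ j ∈ Finset.range k, F j ω with hgdef
  have hgint : ∀ k, Integrable (g k) P := by
    intro k
    have := ((key k).1.const_mul (Real.exp ((lam - c) * t) * (lam ^ k)⁻¹))
    refine this.congr (Filter.Eventually.of_forall fun ω => ?_)
    simp [hgdef, mul_assoc]
  have hfg : ∀ k, Set.EqOn f (g k) (s k) := by
    intro k ω hω
    simp only [hs, Set.mem_preimage, Set.mem_singleton_iff] at hω
    simp [hfdef, hgdef, hω, hF]
  have hfint : ∀ k, IntegrableOn f (s k) P := by
    intro k
    exact ((hgint k).integrableOn).congr_fun (fun ω hω => ((hfg k) hω).symm) (hsm k)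
  -- independence of indicator of κ and the product
  have hGind : ∀ k, IndepFun (fun ω => Set.indicator ({k} : Set ℕ) (fun _ => (1:ℝ)) (κ ω))
      (fun ω => ∏ j ∈ Finset.range k, F j ω) P := by
    intro k
    have hΦ : Measurable (Set.indicator ({k} : Set ℕ) (fun _ => (1:ℝ))) :=
      measurable_const.indicator (measurableSet_singleton k)
    have hG : Measurable (fun x : ℕ → ℝ => ∏ j ∈ Finset.range k, (c - h (x j))) :=
      Finset.measurable_prod _ (fun j _ => measurable_const.sub (hmeas.comp (measurable_pi_apply j)))
    exact hκψindep.comp hΦ hG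
  have hΦint : ∀ k, Integrable (fun ω => Set.indicator ({k} : Set ℕ) (fun _ => (1:ℝ)) (κ ω)) P := by
    intro k
    refine (integrable_const (1:ℝ)).mono'
      (((measurable_const.indicator (measurableSet_singleton k)).comp hκmeas)).aestronglyMeasurable
      (Filter.Eventually.of_forall fun ω => ?_)
    by_cases hω : κ ω = k <;> simp [hω]
  have hΦval : ∀ k, ∫ ω, Set.indicator ({k} : Set ℕ) (fun _ => (1:ℝ)) (κ ω) ∂P
      = (P (s k)).toReal := by
    intro k
    have : (fun ω => Set.indicator ({k} : Set ℕ) (fun _ => (1:ℝ)) (κ ω))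
        = Set.indicator (s k) (fun _ => (1:ℝ)) := by
      funext ω
      by_cases hω : κ ω = k <;> simp [hs, Set.indicator_apply, hω]
    rw [this]; exact integral_indicator_one (hsm k)
  -- value of the integral on each piece
  have hsk : ∀ k, ∫ x in s k, f x ∂P
      = Real.exp ((lam - c) * t) * (lam ^ k)⁻¹ * ((P (s k)).toReal * m ^ k) := by
    intro k
    rw [setIntegral_congr_fun (hsm k) (hfg k)]
    have hind : (fun ω => Set.indicator (s k) (g k) ω)
        = fun ω => Real.exp ((lam - c) * t) * (lam ^ k)⁻¹
          * (Set.indicator ({k} : Set ℕ) (fun _ => (1:ℝ)) (κ ω) * ∏ j ∈ Finset.range k, F j ω) := by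
      funext ω
      by_cases hω : κ ω = k
      · have : ω ∈ s k := by simp [hs, hω]
        simp [Set.indicator_of_mem this, hgdef, hω, mul_assoc]
      · have : ω ∉ s k := by simp [hs, hω]
        simp [Set.indicator_of_notMem this, hω]
    have hmul : ∫ ω, Set.indicator ({k} : Set ℕ) (fun _ => (1:ℝ)) (κ ω)
          * (∏ j ∈ Finset.range k, F j ω) ∂P
        = (P (s k)).toReal * m ^ k := by
      have := (hGind k).integral_mul_eq_mul_integral (hΦint k).aestronglyMeasurable ((key k).1).aestronglyMeasurable
      calc ∫ ω, Set.indicator ({k} : Set ℕ) (fun _ => (1:ℝ)) (κ ω)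
            * (∏ j ∈ Finset.range k, F j ω) ∂P
          = (∫ ω, Set.indicator ({k} : Set ℕ) (fun _ => (1:ℝ)) (κ ω) ∂P)
            * ∫ ω, ∏ j ∈ Finset.range k, F j ω ∂P := this
        _ = (P (s k)).toReal * m ^ k := by rw [hΦval k, (key k).2]
    rw [← integral_indicator (hsm k)]
    calc ∫ ω, Set.indicator (s k) (g k) ω ∂P
        = ∫ ω, Real.exp ((lam - c) * t) * (lam ^ k)⁻¹
          * (Set.indicator ({k} : Set ℕ) (fun _ => (1:ℝ)) (κ ω)
            * ∏ j ∈ Finset.range k, F j ω) ∂P := by rw [hind]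
      _ = Real.exp ((lam - c) * t) * (lam ^ k)⁻¹
          * ∫ ω, Set.indicator ({k} : Set ℕ) (fun _ => (1:ℝ)) (κ ω)
            * ∏ j ∈ Finset.range k, F j ω ∂P := integral_const_mul _ _
      _ = _ := by rw [hmul]
  -- summability of the norm integrals
  have hlamk : ∀ k : ℕ, (0:ℝ) < lam ^ k := fun k => pow_pos hlam k
  set v : ℕ → ℝ := fun k => Real.exp ((lam - c) * t) * Real.exp (-(lam*t))
      * ((t*B)^k / Nat.factorial k) with hv
  have hvsum : Summable v :=
    (Real.summable_pow_div_factorial (t*B)).mul_left _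
  have hnormle : ∀ k, ∫ x in s k, ‖f x‖ ∂P ≤ v k := by
    intro k
    have hbound : ∀ᵐ ω ∂(P.restrict (s k)), ‖f ω‖
        ≤ Real.exp ((lam - c) * t) * (lam ^ k)⁻¹ * B ^ k := by
      filter_upwards [ae_restrict_of_ae hmem, ae_restrict_mem (hsm k)] with ω hω hωk
      simp only [hs, Set.mem_preimage, Set.mem_singleton_iff] at hωk
      have hprod : |∏ j ∈ Finset.range k, (c - h (ψ j ω))| ≤ B ^ k := by
        rw [Finset.abs_prod]
        calc ∏ j ∈ Finset.range k, |c - h (ψ j ω)|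
            ≤ ∏ _j ∈ Finset.range k, B := by
              refine Finset.prod_le_prod (fun j _ => abs_nonneg _) (fun j _ => ?_)
              have := hbd (ψ j ω) (hω j)
              calc |c - h (ψ j ω)| ≤ |c| + |h (ψ j ω)| := abs_sub _ _
                _ ≤ B := by rw [hB]; linarith
          _ = B ^ k := by simp
      calc ‖f ω‖ = Real.exp ((lam - c) * t) * (lam ^ κ ω)⁻¹
            * |∏ j ∈ Finset.range (κ ω), (c - h (ψ j ω))| := by
              rw [hfdef]
              simp only [Real.norm_eq_abs, abs_mul]
              rw [abs_of_pos (Real.exp_pos _), abs_of_pos (by positivity : (0:ℝ) < (lam ^ κ ω)⁻¹)]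
        _ ≤ Real.exp ((lam - c) * t) * (lam ^ k)⁻¹ * B ^ k := by
              rw [hωk]
              exact mul_le_mul_of_nonneg_left (hωk ▸ hprod)
                (by positivity)
    have h1 : ∫ x in s k, ‖f x‖ ∂P
        ≤ ∫ _x in s k, Real.exp ((lam - c) * t) * (lam ^ k)⁻¹ * B ^ k ∂P :=
      integral_mono_ae (hfint k).norm (integrable_const _) hbound
    have h2 : ∫ _x in s k, Real.exp ((lam - c) * t) * (lam ^ k)⁻¹ * B ^ k ∂P
        = (P (s k)).toReal * (Real.exp ((lam - c) * t) * (lam ^ k)⁻¹ * B ^ k) := by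
      rw [setIntegral_const]; rw [smul_eq_mul]; rfl
    have h3 : (P (s k)).toReal * (Real.exp ((lam - c) * t) * (lam ^ k)⁻¹ * B ^ k) = v k := by
      rw [hpk k]
      simp only [hv]
      rw [mul_pow, mul_pow]
      field_simp
    calc ∫ x in s k, ‖f x‖ ∂P ≤ _ := h1
      _ = v k := by rw [h2, h3]
  have hnormsum : Summable (fun k => ∫ x in s k, ‖f x‖ ∂P) :=
    Summable.of_nonneg_of_le (fun k => integral_nonneg (fun x => norm_nonneg _)) hnormle hvsum
  have hintOn : IntegrableOn f (⋃ k, s k) P :=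
    integrableOn_iUnion_of_summable_integral_norm hfint hnormsum
  -- decompose the integral
  have hmain : ∫ ω, f ω ∂P = ∑' k, ∫ x in s k, f x ∂P := by
    have := integral_iUnion hsm hsd hintOn
    rw [hsu] at this
    simpa [Measure.restrict_univ] using this
  -- compute the sum
  have hterm : ∀ k, ∫ x in s k, f x ∂P
      = (Real.exp ((lam - c) * t) * Real.exp (-(lam*t))) * ((t*m)^k / Nat.factorial k) := by
    intro k
    rw [hsk k, hpk k, mul_pow, mul_pow]
    field_simp
  have hsum : ∑' k, ∫ x in s k, f x ∂P
      = (Real.exp ((lam - c) * t) * Real.exp (-(lam*t))) * Real.exp (t*m) := by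
    rw [tsum_congr hterm, tsum_mul_left]
    congr 1
    rw [Real.exp_eq_exp_ℝ, NormedSpace.exp_eq_tsum_div]
  have htm : t * m = t * c - I := by
    rw [hm]; field_simp
  calc ∫ ω, Real.exp ((lam - c) * t) * (lam ^ κ ω)⁻¹
        * ∏ j ∈ Finset.range (κ ω), (c - h (ψ j ω)) ∂P
      = ∫ ω, f ω ∂P := rfl
    _ = (Real.exp ((lam - c) * t) * Real.exp (-(lam*t))) * Real.exp (t*m) := by
        rw [hmain, hsum]
    _ = Real.exp ((lam - c) * t + -(lam*t) + t*m) := by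
        rw [Real.exp_add, Real.exp_add]
    _ = Real.exp (-I) := by
        rw [htm]; congr 1; ring
end

section
/- Unbiasedness of the Generalised Poisson Estimator (conditional on the path): if U ≥ sup_{s∈[0,t]} h(s), then E[I] = exp( −∫_0^t h(s) ds ). -/
open MeasureTheory ProbabilityTheory Real Finset

/-- Unbiasedness of the Generalised Poisson Estimator (conditional on the path):
if `U ≥ sup_{s ∈ [0,t]} h(s)`, then
`E[ e^{-Ut} (t^κ / (κ! p(κ))) ∏_{j=1}^{κ} (U - h(ψ_j)) ] = exp(-∫_0^t h(s) ds)`,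
where the `ψ_j` are i.i.d. uniform on `[0,t]`, independent of `κ`, and `κ` has
probability mass function `p` with `p(k) > 0` for all `k`. -/
theorem generalised_poisson_estimator_unbiased
    {Ω : Type*} [MeasurableSpace Ω] (P : Measure Ω) [IsProbabilityMeasure P]
    (t : ℝ) (ht : 0 < t)
    (h : ℝ → ℝ) (hmeas : Measurable h)
    (Ch : ℝ) (hbd : ∀ s ∈ Set.Icc (0 : ℝ) t, |h s| ≤ Ch)
    (ψ : ℕ → Ω → ℝ) (hψmeas : ∀ j, Measurable (ψ j))
    (hψlaw : ∀ j, Measure.map (ψ j) P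
      = (ENNReal.ofReal t)⁻¹ • volume.restrict (Set.Icc (0 : ℝ) t))
    (hψindep : iIndepFun ψ P)
    (κ : Ω → ℕ) (hκmeas : Measurable κ)
    (hκψindep : IndepFun κ (fun ω => fun j => ψ j ω) P)
    (p : ℕ → ℝ) (hp : ∀ k, 0 < p k)
    (hκlaw : ∀ k : ℕ, P {ω | κ ω = k} = ENNReal.ofReal (p k))
    (U : ℝ) (hU : ∀ s ∈ Set.Icc (0 : ℝ) t, h s ≤ U) :
    ∫ ω, Real.exp (-(U * t)) * t ^ κ ω / (Nat.factorial (κ ω) * p (κ ω))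
        * ∏ j ∈ Finset.range (κ ω), (U - h (ψ j ω)) ∂P
      = Real.exp (-∫ s in (0 : ℝ)..t, h s) := by
  classical
  -- basic bounds
  have hCh0 : 0 ≤ Ch := le_trans (abs_nonneg _) (hbd 0 ⟨le_refl 0, ht.le⟩)
  set M : ℝ := |U| + Ch with hM
  have hM0 : 0 ≤ M := by positivity
  have hMbd : ∀ s ∈ Set.Icc (0:ℝ) t, |U - h s| ≤ M := by
    intro s hs
    have h1 := hbd s hs
    calc |U - h s| ≤ |U| + |h s| := abs_sub _ _
      _ ≤ M := by rw [hM]; linarith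
  -- almost surely all ψ j land in [0, t]
  have haej : ∀ j, ∀ᵐ ω ∂P, ψ j ω ∈ Set.Icc (0:ℝ) t := by
    intro j
    have hmc : MeasurableSet (Set.Icc (0:ℝ) t)ᶜ := measurableSet_Icc.compl
    have hmap := Measure.map_apply (μ := P) (hψmeas j) hmc
    rw [hψlaw j] at hmap
    have hz : ((ENNReal.ofReal t)⁻¹ • volume.restrict (Set.Icc (0:ℝ) t))
        (Set.Icc (0:ℝ) t)ᶜ = 0 := by
      rw [Measure.smul_apply, Measure.restrict_apply hmc, Set.compl_inter_self]
      simp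
    rw [hz] at hmap
    refine (ae_iff).2 ?_
    exact hmap.symm
  have hae : ∀ᵐ ω ∂P, ∀ j, ψ j ω ∈ Set.Icc (0:ℝ) t := ae_all_iff.2 haej
  -- the factors
  set b : ℕ → Ω → ℝ := fun j ω => U - h (ψ j ω) with hbdef
  have hbmeas : ∀ j, Measurable (b j) := fun j =>
    measurable_const.sub (hmeas.comp (hψmeas j))
  have hbindep : iIndepFun b P :=
    hψindep.comp (fun _ x => U - h x) (fun _ => measurable_const.sub hmeas)
  have hbinteg : ∀ j, Integrable (b j) P := by
    intro j
    refine Integrable.mono' (integrable_const M) ((hbmeas j).aestronglyMeasurable) ?_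
    filter_upwards [haej j] with ω hω
    simpa [hbdef, Real.norm_eq_abs] using hMbd _ hω
  set a : ℝ := ∫ x, (U - h x) ∂((ENNReal.ofReal t)⁻¹ • volume.restrict (Set.Icc (0:ℝ) t))
    with hadef
  have hbint_eq : ∀ j, ∫ ω, b j ω ∂P = a := by
    intro j
    have hint := integral_map (μ := P) (φ := ψ j) (hψmeas j).aemeasurable
      (f := fun x => U - h x) ((measurable_const.sub hmeas).aestronglyMeasurable)
    rw [hψlaw j] at hint
    exact hint.symm
  have hprodinteg : ∀ k, Integrable (fun ω => ∏ j ∈ Finset.range k, b j ω) P := by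
    intro k
    refine Integrable.mono' (integrable_const (M ^ k))
      ((Finset.measurable_prod _ fun j _ => hbmeas j).aestronglyMeasurable) ?_
    filter_upwards [hae] with ω hω
    rw [Real.norm_eq_abs, Finset.abs_prod]
    calc ∏ j ∈ Finset.range k, |b j ω|
        ≤ ∏ j ∈ Finset.range k, M :=
          Finset.prod_le_prod (fun j _ => abs_nonneg _) (fun j _ => hMbd _ (hω j))
      _ = M ^ k := by simp
  have hprodint : ∀ k, ∫ ω, ∏ j ∈ Finset.range k, b j ω ∂P = a ^ k := by
    intro k
    induction k with
    | zero => simp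
    | succ n ih =>
      have hind : IndepFun (∏ j ∈ Finset.range n, b j) (b n) P :=
        hbindep.indepFun_prod_range_succ hbmeas n
      have hfun : (∏ j ∈ Finset.range n, b j) = fun ω => ∏ j ∈ Finset.range n, b j ω := by
        funext ω; exact Finset.prod_apply ω _ _
      have hmul := hind.integral_mul_eq_mul_integral (by rw [hfun]; exact (hprodinteg n).aestronglyMeasurable)
        (hbinteg n).aestronglyMeasurable
      calc ∫ ω, ∏ j ∈ Finset.range (n+1), b j ω ∂P
          = ∫ ω, (∏ j ∈ Finset.range n, b j ω) * b n ω ∂P := by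
            simp only [Finset.prod_range_succ]
        _ = (∫ ω, ∏ j ∈ Finset.range n, b j ω ∂P) * ∫ ω, b n ω ∂P := by
            simpa [hfun, Pi.mul_apply] using hmul
        _ = a ^ n * a := by rw [ih, hbint_eq]
        _ = a ^ (n+1) := (pow_succ a n).symm
  -- the partition by values of κ
  set S : ℕ → Set Ω := fun k => {ω | κ ω = k} with hSdef
  have hSmeas : ∀ k, MeasurableSet (S k) := fun k => hκmeas (measurableSet_singleton k)
  have hSdisj : Pairwise (Function.onFun Disjoint S) := by
    intro i j hij
    refine Set.disjoint_left.2 fun ω hi hj => hij ?_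
    have h1 : κ ω = i := hi
    have h2 : κ ω = j := hj
    rw [← h1, ← h2]
  have hSunion : (⋃ k, S k) = Set.univ := by
    ext ω; simp [hSdef]
  -- the integrand
  set g : Ω → ℝ := fun ω => Real.exp (-(U * t)) * t ^ κ ω / (Nat.factorial (κ ω) * p (κ ω))
      * ∏ j ∈ Finset.range (κ ω), (U - h (ψ j ω)) with hgdef
  set c : ℕ → ℝ := fun k => Real.exp (-(U * t)) * t ^ k / (Nat.factorial k * p k) with hcdef
  have hgc : ∀ ω, g ω = c (κ ω) * ∏ j ∈ Finset.range (κ ω), (U - h (ψ j ω)) := fun ω => rfl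
  have hgmeas : Measurable g := by
    have hG : Measurable fun q : (ℕ → ℝ) × ℕ =>
        c q.2 * ∏ j ∈ Finset.range q.2, (U - h (q.1 j)) := by
      apply measurable_from_prod_countable_left
      intro k
      dsimp only
      exact measurable_const.mul
        (Finset.measurable_prod _ fun j _ =>
          measurable_const.sub (hmeas.comp (measurable_pi_apply j)))
    have hpair : Measurable fun ω => (((fun j => ψ j ω), κ ω) : (ℕ → ℝ) × ℕ) :=
      (measurable_pi_lambda _ fun j => hψmeas j).prodMk hκmeas
    exact hG.comp hpair
  -- integrability of the integrand
  have hck_pos : ∀ k, 0 < c k := by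
    intro k
    have : (0:ℝ) < Nat.factorial k * p k :=
      mul_pos (by exact_mod_cast Nat.factorial_pos k) (hp k)
    exact div_pos (mul_pos (Real.exp_pos _) (pow_pos ht k)) this
  have hterm : ∀ k, c k * M ^ k * p k = Real.exp (-(U * t)) * (t * M) ^ k / Nat.factorial k := by
    intro k
    have hfk : (Nat.factorial k : ℝ) ≠ 0 := by exact_mod_cast (Nat.factorial_pos k).ne'
    rw [hcdef, mul_pow]
    field_simp [hfk, (hp k).ne']
  have hsum : Summable (fun k => Real.exp (-(U * t)) * (t * M) ^ k / Nat.factorial k) := by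
    simpa [mul_div_assoc] using (Real.summable_pow_div_factorial (t * M)).mul_left
      (Real.exp (-(U * t)))
  have hgbd : ∀ k, ∀ ω, ω ∈ S k → (∀ j, ψ j ω ∈ Set.Icc (0:ℝ) t) → |g ω| ≤ c k * M ^ k := by
    intro k ω hωk hωin
    have hκω : κ ω = k := hωk
    rw [hgc, hκω, abs_mul, abs_of_pos (hck_pos k)]
    refine mul_le_mul_of_nonneg_left ?_ (hck_pos k).le
    rw [Finset.abs_prod]
    calc ∏ j ∈ Finset.range k, |U - h (ψ j ω)|
        ≤ ∏ j ∈ Finset.range k, M :=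
          Finset.prod_le_prod (fun j _ => abs_nonneg _) (fun j _ => hMbd _ (hωin j))
      _ = M ^ k := by simp
  have hginteg : Integrable g P := by
    refine ⟨hgmeas.aestronglyMeasurable, ?_⟩
    have hlin : ∫⁻ ω, ‖g ω‖₊ ∂P = ∑' k, ∫⁻ ω in S k, ‖g ω‖₊ ∂P := by
      conv_lhs => rw [← setLIntegral_univ, ← hSunion]
      exact lintegral_iUnion hSmeas hSdisj _
    have hkle : ∀ k, ∫⁻ ω in S k, ‖g ω‖₊ ∂P
        ≤ ENNReal.ofReal (Real.exp (-(U * t)) * (t * M) ^ k / Nat.factorial k) := by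
      intro k
      calc ∫⁻ ω in S k, ‖g ω‖₊ ∂P
          ≤ ∫⁻ _ in S k, ENNReal.ofReal (c k * M ^ k) ∂P := by
            refine lintegral_mono_ae ?_
            filter_upwards [ae_restrict_of_ae hae, ae_restrict_mem (hSmeas k)] with ω hω hωk
            rw [← enorm_eq_nnnorm, ← ofReal_norm_eq_enorm, Real.norm_eq_abs]
            exact ENNReal.ofReal_le_ofReal (hgbd k ω hωk hω)
        _ = ENNReal.ofReal (c k * M ^ k) * P (S k) := setLIntegral_const _ _
        _ = ENNReal.ofReal (Real.exp (-(U * t)) * (t * M) ^ k / Nat.factorial k) := by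
            rw [hSdef]
            rw [hκlaw k, ← ENNReal.ofReal_mul (mul_nonneg (hck_pos k).le (pow_nonneg hM0 k)), hterm k]
    rw [HasFiniteIntegral]; change ∫⁻ ω, (‖g ω‖₊ : ENNReal) ∂P < ⊤; rw [hlin]
    calc ∑' k, ∫⁻ ω in S k, ‖g ω‖₊ ∂P
        ≤ ∑' k, ENNReal.ofReal (Real.exp (-(U * t)) * (t * M) ^ k / Nat.factorial k) :=
          ENNReal.tsum_le_tsum hkle
      _ = ENNReal.ofReal (∑' k, Real.exp (-(U * t)) * (t * M) ^ k / Nat.factorial k) :=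
          (ENNReal.ofReal_tsum_of_nonneg (fun k => by positivity) hsum).symm
      _ < ⊤ := ENNReal.ofReal_lt_top
  -- integral over each piece
  have hpiece : ∀ k, ∫ ω in S k, g ω ∂P = c k * (p k * a ^ k) := by
    intro k
    have h1 : Set.EqOn g (fun ω => c k * ∏ j ∈ Finset.range k, (U - h (ψ j ω))) (S k) := by
      intro ω hω
      have hκω : κ ω = k := hω
      rw [hgc, hκω]
    rw [setIntegral_congr_fun (hSmeas k) h1, integral_const_mul]
    congr 1
    -- independence step
    set X : Ω → ℝ := fun ω => if κ ω = k then 1 else 0 with hXdef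
    set Y : Ω → ℝ := fun ω => ∏ j ∈ Finset.range k, (U - h (ψ j ω)) with hYdef
    have hXY : IndepFun X Y P := by
      have hφ : Measurable fun n : ℕ => if n = k then (1:ℝ) else 0 := measurable_of_countable _
      have hG : Measurable fun v : ℕ → ℝ => ∏ j ∈ Finset.range k, (U - h (v j)) :=
        Finset.measurable_prod _ fun j _ =>
          measurable_const.sub (hmeas.comp (measurable_pi_apply j))
      exact hκψindep.comp hφ hG
    have hXind : X = (S k).indicator (fun _ => (1:ℝ)) := by
      funext ω
      by_cases hc : κ ω = k <;> simp [hXdef, hSdef, Set.indicator, hc]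
    have hXinteg : Integrable X P := by
      rw [hXind]; exact (integrable_const (1:ℝ)).indicator (hSmeas k)
    have hYinteg : Integrable Y P := hprodinteg k
    have hmul := hXY.integral_mul_eq_mul_integral hXinteg.aestronglyMeasurable hYinteg.aestronglyMeasurable
    have hXint : ∫ ω, X ω ∂P = p k := by
      rw [hXind]
      rw [show ((S k).indicator (fun _ => (1:ℝ))) = (S k).indicator 1 from rfl]
      rw [integral_indicator_one (hSmeas k), hSdef, measureReal_def, hκlaw k,
        ENNReal.toReal_ofReal (hp k).le]
    have hYint : ∫ ω, Y ω ∂P = a ^ k := hprodint k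
    have hind : (S k).indicator Y = fun ω => X ω * Y ω := by
      funext ω
      by_cases hc : κ ω = k <;> simp [hXdef, hSdef, Set.indicator, hc]
    calc ∫ ω in S k, ∏ j ∈ Finset.range k, (U - h (ψ j ω)) ∂P
        = ∫ ω, (S k).indicator Y ω ∂P := (integral_indicator (hSmeas k)).symm
      _ = ∫ ω, X ω * Y ω ∂P := by rw [hind]
      _ = (∫ ω, X ω ∂P) * ∫ ω, Y ω ∂P := by simpa [Pi.mul_apply] using hmul
      _ = p k * a ^ k := by rw [hXint, hYint]
  -- main decomposition
  have hmain : ∫ ω, g ω ∂P = ∑' k, c k * (p k * a ^ k) := by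
    have h1 : ∫ ω, g ω ∂P = ∫ ω in ⋃ k, S k, g ω ∂P := by
      rw [hSunion, setIntegral_univ]
    rw [h1, integral_iUnion hSmeas hSdisj hginteg.integrableOn]
    exact tsum_congr hpiece
  -- compute a
  have hIh : IntegrableOn h (Set.Icc (0:ℝ) t) volume := by
    refine Integrable.mono' (integrable_const Ch) (hmeas.aestronglyMeasurable.restrict) ?_
    filter_upwards [ae_restrict_mem measurableSet_Icc] with s hs
    simpa [Real.norm_eq_abs] using hbd s hs
  have hta : t * a = U * t - ∫ s in (0:ℝ)..t, h s := by
    have ha2 : a = t⁻¹ * ∫ x in Set.Icc (0:ℝ) t, (U - h x) := by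
      rw [hadef, integral_smul_measure, ENNReal.toReal_inv, ENNReal.toReal_ofReal ht.le,
        smul_eq_mul]
    have hsub : ∫ x in Set.Icc (0:ℝ) t, (U - h x)
        = U * t - ∫ x in Set.Icc (0:ℝ) t, h x := by
      rw [integral_sub ((integrableOn_const (s := Set.Icc (0:ℝ) t) (μ := volume) (C := U) (by simp [Real.volume_Icc]) : IntegrableOn (fun _ => U) (Set.Icc (0:ℝ) t) volume)) hIh]
      congr 1
      rw [setIntegral_const, measureReal_def, Real.volume_Icc, smul_eq_mul,
        ENNReal.toReal_ofReal (by linarith : (0:ℝ) ≤ t - 0)]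
      ring
    have hIcc : ∫ x in Set.Icc (0:ℝ) t, h x = ∫ s in (0:ℝ)..t, h s := by
      rw [intervalIntegral.integral_of_le ht.le, integral_Icc_eq_integral_Ioc]
    rw [ha2, hsub, hIcc]
    field_simp
  -- final computation
  have hexp : Real.exp (t * a) = ∑' k : ℕ, (t * a) ^ k / Nat.factorial k := by
    rw [Real.exp_eq_exp_ℝ, NormedSpace.exp_eq_tsum_div]
  calc ∫ ω, Real.exp (-(U * t)) * t ^ κ ω / (Nat.factorial (κ ω) * p (κ ω))
        * ∏ j ∈ Finset.range (κ ω), (U - h (ψ j ω)) ∂P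
      = ∫ ω, g ω ∂P := rfl
    _ = ∑' k, c k * (p k * a ^ k) := hmain
    _ = ∑' k, Real.exp (-(U * t)) * ((t * a) ^ k / Nat.factorial k) := by
        refine tsum_congr fun k => ?_
        have hfk : (Nat.factorial k : ℝ) ≠ 0 := by exact_mod_cast (Nat.factorial_pos k).ne'
        rw [hcdef, mul_pow]
        field_simp [hfk, (hp k).ne']
    _ = Real.exp (-(U * t)) * ∑' k : ℕ, (t * a) ^ k / Nat.factorial k := tsum_mul_left
    _ = Real.exp (-(U * t)) * Real.exp (t * a) := by rw [hexp]
    _ = Real.exp (-∫ s in (0:ℝ)..t, h s) := by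
        rw [← Real.exp_add]
        congr 1
        rw [hta]
        ring
end

section
/- Second moment formula for the Generalised Poisson Estimator (first part of Theorem 1, conditional on the path): if U ≥ sup_{s∈[0,t]} h(s), then E[I²] = e^{−2Ut} · ∑_{k=0}^{∞} ( t^k / (p(k) · (k!)²) ) · b^k, where b = ∫_0^t (U − h(s))² ds (both sides possibly being +∞). -/
open MeasureTheory ProbabilityTheory Real Finset

/-- Second moment formula for the Generalised Poisson Estimator (first part of
Theorem 1, conditional on the path): if `U ≥ sup_{s ∈ [0,t]} h(s)`, then
`E[I²] = e^{-2Ut} ∑_{k=0}^∞ (t^k / (p(k) (k!)²)) bᵏ`, where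
`b = ∫_0^t (U - h(s))² ds` (both sides possibly being `+∞`). Here
`I = e^{-Ut} (t^κ / (κ! p(κ))) ∏_{j=1}^{κ} (U - h(ψ_j))`, the `ψ_j` are i.i.d.
uniform on `[0,t]`, independent of `κ`, and `κ` has probability mass function
`p` with `p(k) > 0` for all `k`. -/
theorem generalised_poisson_estimator_second_moment
    {Ω : Type*} [MeasurableSpace Ω] (P : Measure Ω) [IsProbabilityMeasure P]
    (t : ℝ) (ht : 0 < t)
    (h : ℝ → ℝ) (hmeas : Measurable h)
    (Ch : ℝ) (hbd : ∀ s ∈ Set.Icc (0 : ℝ) t, |h s| ≤ Ch)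
    (ψ : ℕ → Ω → ℝ) (hψmeas : ∀ j, Measurable (ψ j))
    (hψlaw : ∀ j, Measure.map (ψ j) P
      = (ENNReal.ofReal t)⁻¹ • volume.restrict (Set.Icc (0 : ℝ) t))
    (hψindep : iIndepFun ψ P)
    (κ : Ω → ℕ) (hκmeas : Measurable κ)
    (hκψindep : IndepFun κ (fun ω => fun j => ψ j ω) P)
    (p : ℕ → ℝ) (hp : ∀ k, 0 < p k)
    (hκlaw : ∀ k : ℕ, P {ω | κ ω = k} = ENNReal.ofReal (p k))
    (U : ℝ) (hU : ∀ s ∈ Set.Icc (0 : ℝ) t, h s ≤ U)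
    (b : ℝ) (hb : b = ∫ s in (0 : ℝ)..t, (U - h s) ^ 2) :
    ∫⁻ ω, ENNReal.ofReal ((Real.exp (-(U * t)) * t ^ κ ω / (Nat.factorial (κ ω) * p (κ ω))
        * ∏ j ∈ Finset.range (κ ω), (U - h (ψ j ω))) ^ 2) ∂P
      = ∑' k : ℕ, ENNReal.ofReal (Real.exp (-(2 * U * t))
          * (t ^ k / (p k * (Nat.factorial k) ^ 2)) * b ^ k) := by
  classical
  have hb0 : 0 ≤ b := by
    rw [hb]; exact intervalIntegral.integral_nonneg ht.le fun s _ => sq_nonneg _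
  -- measurability of the single-factor function
  have hfumeas : Measurable fun x : ℝ => ENNReal.ofReal ((U - h x) ^ 2) :=
    ENNReal.measurable_ofReal.comp ((measurable_const.sub hmeas).pow_const 2)
  -- integrability of (U - h)² on Ioc 0 t
  have hint : IntegrableOn (fun s => (U - h s) ^ 2) (Set.Ioc 0 t) volume := by
    refine Measure.integrableOn_of_bounded (M := (|U| + Ch) ^ 2)
      (by simp [Real.volume_Ioc])
      ((measurable_const.sub hmeas).pow_const 2).aestronglyMeasurable ?_
    filter_upwards [ae_restrict_mem measurableSet_Ioc] with x hx
    have hx' : x ∈ Set.Icc 0 t := Set.Ioc_subset_Icc_self hx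
    have h1 : |U - h x| ≤ |U| + Ch := by
      calc |U - h x| ≤ |U| + |h x| := by
            rw [sub_eq_add_neg]; exact (abs_add_le _ _).trans (by rw [abs_neg])
        _ ≤ |U| + Ch := by linarith [hbd x hx']
    have h2 : (U - h x) ^ 2 ≤ (|U| + Ch) ^ 2 := by
      rw [← sq_abs]
      exact pow_le_pow_left₀ (abs_nonneg _) h1 2
    rw [Real.norm_eq_abs, abs_of_nonneg (sq_nonneg _)]
    exact h2
  -- the set integral over Icc
  have hIcc : ∫⁻ x in Set.Icc (0:ℝ) t, ENNReal.ofReal ((U - h x) ^ 2)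
      = ENNReal.ofReal b := by
    rw [← Measure.restrict_congr_set Ioc_ae_eq_Icc,
      ← ofReal_integral_eq_lintegral_ofReal hint (ae_of_all _ fun x => sq_nonneg _)]
    congr 1
    rw [hb, intervalIntegral.integral_of_le ht.le]
  -- the single factor lintegral
  have hfactor : ∀ j : ℕ, ∫⁻ ω, ENNReal.ofReal ((U - h (ψ j ω)) ^ 2) ∂P
      = (ENNReal.ofReal t)⁻¹ * ENNReal.ofReal b := by
    intro j
    have hmap : ∫⁻ ω, ENNReal.ofReal ((U - h (ψ j ω)) ^ 2) ∂P
        = ∫⁻ x, ENNReal.ofReal ((U - h x) ^ 2) ∂(Measure.map (ψ j) P) :=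
      (lintegral_map hfumeas (hψmeas j)).symm
    rw [hmap, hψlaw j, lintegral_smul_measure, hIcc, smul_eq_mul]
  -- independence of the composed family
  have hFmeas : ∀ j : ℕ, Measurable fun ω => ENNReal.ofReal ((U - h (ψ j ω)) ^ 2) :=
    fun j => hfumeas.comp (hψmeas j)
  have hF : iIndepFun
      (fun j ω => ENNReal.ofReal ((U - h (ψ j ω)) ^ 2)) P :=
    hψindep.comp (fun _ x => ENNReal.ofReal ((U - h x) ^ 2)) (fun _ => hfumeas)
  -- product lintegral
  have hprod : ∀ k : ℕ,
      ∫⁻ ω, ∏ j ∈ Finset.range k, ENNReal.ofReal ((U - h (ψ j ω)) ^ 2) ∂P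
        = ((ENNReal.ofReal t)⁻¹ * ENNReal.ofReal b) ^ k := by
    intro k
    induction k with
    | zero => simp
    | succ n ih =>
      have hindep : IndepFun
          (fun ω => ∏ j ∈ Finset.range n, ENNReal.ofReal ((U - h (ψ j ω)) ^ 2))
          (fun ω => ENNReal.ofReal ((U - h (ψ n ω)) ^ 2)) P := by
        have := hF.indepFun_prod_range_succ hFmeas n
        have heq : (∏ j ∈ Finset.range n, fun ω => ENNReal.ofReal ((U - h (ψ j ω)) ^ 2))
            = fun ω => ∏ j ∈ Finset.range n, ENNReal.ofReal ((U - h (ψ j ω)) ^ 2) := by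
          funext ω; simp
        rwa [heq] at this
      have hpm : Measurable fun ω => ∏ j ∈ Finset.range n,
          ENNReal.ofReal ((U - h (ψ j ω)) ^ 2) :=
        Finset.measurable_prod _ fun j _ => hFmeas j
      have hmul := lintegral_mul_eq_lintegral_mul_lintegral_of_indepFun'' hpm.aemeasurable
        (hFmeas n).aemeasurable hindep
      calc ∫⁻ ω, ∏ j ∈ Finset.range (n+1), ENNReal.ofReal ((U - h (ψ j ω)) ^ 2) ∂P
          = ∫⁻ ω, (∏ j ∈ Finset.range n, ENNReal.ofReal ((U - h (ψ j ω)) ^ 2))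
              * ENNReal.ofReal ((U - h (ψ n ω)) ^ 2) ∂P := by
            simp_rw [Finset.prod_range_succ]
        _ = (∫⁻ ω, ∏ j ∈ Finset.range n, ENNReal.ofReal ((U - h (ψ j ω)) ^ 2) ∂P)
              * ∫⁻ ω, ENNReal.ofReal ((U - h (ψ n ω)) ^ 2) ∂P := hmul
        _ = ((ENNReal.ofReal t)⁻¹ * ENNReal.ofReal b) ^ (n+1) := by
            rw [ih, hfactor n, pow_succ]
  -- decomposition by κ
  set F : Ω → ENNReal := fun ω =>
    ENNReal.ofReal ((Real.exp (-(U * t)) * t ^ κ ω / (Nat.factorial (κ ω) * p (κ ω))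
      * ∏ j ∈ Finset.range (κ ω), (U - h (ψ j ω))) ^ 2) with hFdef
  set c : ℕ → ENNReal := fun k =>
    ENNReal.ofReal ((Real.exp (-(U * t)) * t ^ k / (Nat.factorial k * p k)) ^ 2) with hcdef
  set G : ℕ → Ω → ENNReal := fun k ω =>
    ∏ j ∈ Finset.range k, ENNReal.ofReal ((U - h (ψ j ω)) ^ 2) with hGdef
  have hA : ∀ k : ℕ, MeasurableSet {ω | κ ω = k} :=
    fun k => hκmeas (measurableSet_singleton k)
  have hGmeas : ∀ k, Measurable (G k) := by
    intro k
    apply Finset.measurable_prod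
    exact fun j _ => hFmeas j
  -- on {κ = k}, F equals c k * G k
  have hFeq : ∀ k : ℕ, ∀ ω ∈ {ω | κ ω = k}, F ω = c k * G k ω := by
    intro k ω hω
    have hκω : κ ω = k := hω
    simp only [hFdef, hcdef, hGdef, hκω]
    rw [mul_pow, ← Finset.prod_pow, ENNReal.ofReal_mul (sq_nonneg _)]
    congr 1
    exact ENNReal.ofReal_prod_of_nonneg fun j _ => sq_nonneg _
  -- pointwise decomposition
  have hdecomp : ∀ ω : Ω, F ω = ∑' k : ℕ, Set.indicator {ω | κ ω = k} F ω := by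
    intro ω
    rw [tsum_eq_single (κ ω)]
    · simp [Set.indicator_apply]
    · intro k hk
      simp [Set.indicator_apply, Ne.symm hk]
  have hind_eq : ∀ k : ℕ, Set.indicator {ω | κ ω = k} F
      = fun ω => (if κ ω = k then c k else 0) * G k ω := by
    intro k
    rw [Set.indicator_congr (hFeq k)]
    funext ω
    simp only [Set.indicator_apply, Set.mem_setOf_eq]
    split_ifs <;> simp
  -- the independence of the indicator and G k
  have hterm : ∀ k : ℕ, ∫⁻ ω, Set.indicator {ω | κ ω = k} F ω ∂P
      = c k * ENNReal.ofReal (p k) * ((ENNReal.ofReal t)⁻¹ * ENNReal.ofReal b) ^ k := by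
    intro k
    have hGcomp : G k = (fun y : ℕ → ℝ =>
        ∏ j ∈ Finset.range k, ENNReal.ofReal ((U - h (y j)) ^ 2))
        ∘ (fun ω => fun j => ψ j ω) := by
      funext ω; simp [hGdef, Function.comp]
    have hξ : (fun ω => (if κ ω = k then c k else 0))
        = (fun n : ℕ => if n = k then c k else 0) ∘ κ := rfl
    have hφmeas : Measurable fun y : ℕ → ℝ =>
        ∏ j ∈ Finset.range k, ENNReal.ofReal ((U - h (y j)) ^ 2) := by
      apply Finset.measurable_prod
      exact fun j _ => hfumeas.comp (measurable_pi_apply j)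
    have hindep : IndepFun (fun ω => (if κ ω = k then c k else 0)) (G k) P := by
      rw [hGcomp, hξ]
      exact hκψindep.comp measurable_from_top hφmeas
    have hmul := lintegral_mul_eq_lintegral_mul_lintegral_of_indepFun''
      (f := fun ω => (if κ ω = k then c k else 0)) (g := G k)
      (show Measurable ((fun n : ℕ => if n = k then c k else 0) ∘ κ) from
        measurable_from_top.comp hκmeas).aemeasurable
      (hGmeas k).aemeasurable hindep
    have hindint : ∫⁻ ω, (if κ ω = k then c k else 0) ∂P
        = c k * ENNReal.ofReal (p k) := by
      have : (fun ω => (if κ ω = k then c k else 0))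
          = Set.indicator {ω | κ ω = k} (fun _ => c k) := by
        funext ω
        simp [Set.indicator_apply]
      rw [this, lintegral_indicator_const (hA k), hκlaw k]
    calc ∫⁻ ω, Set.indicator {ω | κ ω = k} F ω ∂P
        = ∫⁻ ω, (if κ ω = k then c k else 0) * G k ω ∂P := by
          rw [hind_eq k]
      _ = (∫⁻ ω, (if κ ω = k then c k else 0) ∂P) * ∫⁻ ω, G k ω ∂P := hmul
      _ = c k * ENNReal.ofReal (p k) * ((ENNReal.ofReal t)⁻¹ * ENNReal.ofReal b) ^ k := by
          rw [hindint, hprod k]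
  -- put it together
  have hmain : ∫⁻ ω, F ω ∂P
      = ∑' k : ℕ, c k * ENNReal.ofReal (p k)
          * ((ENNReal.ofReal t)⁻¹ * ENNReal.ofReal b) ^ k := by
    rw [lintegral_congr hdecomp, lintegral_tsum]
    · exact tsum_congr hterm
    · intro k
      rw [hind_eq k]
      exact (((show Measurable ((fun n : ℕ => if n = k then c k else 0) ∘ κ) from
        measurable_from_top.comp hκmeas)).mul (hGmeas k)).aemeasurable
  rw [hmain]
  refine tsum_congr fun k => ?_
  -- now the purely numerical identity
  have hk0 : (Nat.factorial k : ℝ) ≠ 0 := Nat.cast_ne_zero.mpr (Nat.factorial_ne_zero k)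
  have hpk : p k ≠ 0 := (hp k).ne'
  have ht0 : t ≠ 0 := ht.ne'
  have hbt : (ENNReal.ofReal t)⁻¹ * ENNReal.ofReal b = ENNReal.ofReal (b / t) := by
    rw [ENNReal.ofReal_div_of_pos ht, div_eq_mul_inv, mul_comm]
  rw [hbt, ← ENNReal.ofReal_pow (div_nonneg hb0 ht.le), hcdef,
    ← ENNReal.ofReal_mul (sq_nonneg _),
    ← ENNReal.ofReal_mul (mul_nonneg (sq_nonneg _) (hp k).le)]
  congr 1
  have hexp : Real.exp (-(U * t)) ^ 2 = Real.exp (-(2 * U * t)) := by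
    rw [sq, ← Real.exp_add]
    congr 1
    ring
  rw [div_pow, mul_pow, hexp, div_pow]
  field_simp
end

section
/- Optimal proposal for the Generalised Poisson Estimator (Theorem 1, conditional on the path): assume U ≥ sup_{s∈[0,t]} h(s) and b = ∫_0^t (U − h(s))² ds > 0. Among all probability mass functions p on ℕ with p(k) > 0 for all k, the second moment E[I²] = e^{−2Ut} ∑_{k≥0} t^k b^k / (p(k) (k!)²) is minimised by the choice p*(k) = e^{−√(tb)} (tb)^{k/2} / k! (the Poisson distribution with mean √(tb)), and the minimal second moment equals e^{−2Ut} · e^{2√(tb)} = ( e^{−Ut} ∑_{k=0}^{∞} (t^{k/2}/k!) b^{k/2} )². -/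
open MeasureTheory Real

lemma gpe_exp_tsum (x : ℝ) : (∑' n : ℕ, x ^ n / (Nat.factorial n : ℝ)) = Real.exp x := by
  rw [Real.exp_eq_exp_ℝ, NormedSpace.exp_eq_tsum_div]

/-- Optimal proposal for the Generalised Poisson Estimator (Theorem 1,
conditional on the path): assume `U ≥ sup_{s ∈ [0,t]} h(s)` and
`b = ∫_0^t (U - h(s))² ds > 0`. Among all strictly positive probability mass
functions `p` on `ℕ`, the second moment
`E[I²] = e^{-2Ut} ∑_k t^k b^k / (p(k) (k!)²)` is minimised by the choice
`p*(k) = e^{-√(tb)} (tb)^{k/2} / k!` (the Poisson distribution with mean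
`√(tb)`), and the minimal second moment equals
`e^{-2Ut} e^{2√(tb)} = ( e^{-Ut} ∑_k (t^{k/2}/k!) b^{k/2} )²`. -/
theorem generalised_poisson_estimator_optimal_proposal
    (t : ℝ) (ht : 0 < t)
    (h : ℝ → ℝ) (hmeas : Measurable h)
    (Ch : ℝ) (hbd : ∀ s ∈ Set.Icc (0 : ℝ) t, |h s| ≤ Ch)
    (U : ℝ) (hU : ∀ s ∈ Set.Icc (0 : ℝ) t, h s ≤ U)
    (b : ℝ) (hb : b = ∫ s in (0 : ℝ)..t, (U - h s) ^ 2) (hb0 : 0 < b) :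
    (∀ p : ℕ → ℝ, (∀ k, 0 < p k) → (∑' k, p k) = 1 →
        ENNReal.ofReal (Real.exp (-(2 * U * t)) * Real.exp (2 * Real.sqrt (t * b)))
          ≤ ∑' k : ℕ, ENNReal.ofReal (Real.exp (-(2 * U * t))
              * (t ^ k * b ^ k / (p k * (Nat.factorial k) ^ 2))))
      ∧ (∑' k : ℕ, Real.exp (-(2 * U * t))
            * (t ^ k * b ^ k
              / ((Real.exp (-Real.sqrt (t * b)) * Real.sqrt (t * b) ^ k / Nat.factorial k)
                  * (Nat.factorial k) ^ 2)))
          = Real.exp (-(2 * U * t)) * Real.exp (2 * Real.sqrt (t * b))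
      ∧ Real.exp (-(2 * U * t)) * Real.exp (2 * Real.sqrt (t * b))
          = (Real.exp (-(U * t))
              * ∑' k : ℕ, Real.sqrt t ^ k * Real.sqrt b ^ k / Nat.factorial k) ^ 2 := by
  have htb : (0:ℝ) < t * b := mul_pos ht hb0
  set c : ℝ := Real.sqrt (t * b) with hcdef
  have hcpos : 0 < c := Real.sqrt_pos.2 htb
  have hc2 : c ^ 2 = t * b := Real.sq_sqrt htb.le
  set E : ℝ := Real.exp (-(2 * U * t)) with hEdef
  have hEpos : 0 < E := Real.exp_pos _
  set S : ℝ := Real.exp c with hSdef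
  have hSpos : 0 < S := Real.exp_pos _
  have hS2 : Real.exp (2 * c) = S ^ 2 := by
    rw [two_mul, Real.exp_add]; ring
  have ha : Summable (fun k : ℕ => c ^ k / (Nat.factorial k : ℝ)) :=
    Real.summable_pow_div_factorial c
  have haS : (∑' k : ℕ, c ^ k / (Nat.factorial k : ℝ)) = S := gpe_exp_tsum c
  have htb_pow : ∀ k : ℕ, t ^ k * b ^ k = (c ^ k) ^ 2 := by
    intro k
    rw [← mul_pow, ← hc2, ← pow_mul, ← pow_mul, Nat.mul_comm]
  refine ⟨?_, ?_, ?_⟩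
  · -- minimality
    intro p hp hp1
    have hpsum : Summable p := by
      by_contra hns
      rw [tsum_eq_zero_of_not_summable hns] at hp1
      norm_num at hp1
    set f : ℕ → ℝ := fun k => E * (t ^ k * b ^ k / (p k * (Nat.factorial k : ℝ) ^ 2)) with hf
    have hfnn : ∀ k, 0 ≤ f k := by
      intro k
      have := hp k
      have : (0:ℝ) < (Nat.factorial k : ℝ) := by positivity
      positivity
    by_cases htop : (∑' k : ℕ, ENNReal.ofReal (f k)) = ⊤
    · rw [htop]; exact le_top
    · have hfsum : Summable f := by
        have := ENNReal.summable_toReal htop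
        refine this.congr fun k => ?_
        rw [ENNReal.toReal_ofReal (hfnn k)]
      set g : ℕ → ℝ := fun k =>
        E * (2 * S * (c ^ k / (Nat.factorial k : ℝ)) - S ^ 2 * p k) with hg
      have hgsum : Summable g := by
        apply Summable.mul_left
        exact ((ha.mul_left (2 * S)).sub (hpsum.mul_left (S ^ 2)))
      have hle : ∀ k, g k ≤ f k := by
        intro k
        have hpk := hp k
        have hfk : (0:ℝ) < (Nat.factorial k : ℝ) := by positivity
        rw [hf, hg]
        have key : 2 * S * (c ^ k / (Nat.factorial k : ℝ)) - S ^ 2 * p k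
            ≤ t ^ k * b ^ k / (p k * (Nat.factorial k : ℝ) ^ 2) := by
          rw [htb_pow k]
          set a : ℝ := c ^ k / (Nat.factorial k : ℝ) with hadef
          have haeq : (c ^ k) ^ 2 / (p k * (Nat.factorial k : ℝ) ^ 2)
              = a ^ 2 / p k := by
            field_simp [hadef]
            rw [hadef]; field_simp
          rw [haeq, le_div_iff₀ hpk]
          nlinarith [sq_nonneg (a - S * p k)]
        nlinarith [hEpos.le, key]
      have hsumg : (∑' k, g k) = E * S ^ 2 := by
        rw [hg, tsum_mul_left,
          Summable.tsum_sub (ha.mul_left (2 * S)) (hpsum.mul_left (S ^ 2)),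
          tsum_mul_left, tsum_mul_left, haS, hp1]
        ring
      have hgef : E * S ^ 2 ≤ ∑' k, f k := by
        rw [← hsumg]; exact Summable.tsum_le_tsum hle hgsum hfsum
      calc ENNReal.ofReal (E * Real.exp (2 * c))
          = ENNReal.ofReal (E * S ^ 2) := by rw [hS2]
        _ ≤ ENNReal.ofReal (∑' k, f k) := ENNReal.ofReal_le_ofReal hgef
        _ = ∑' k, ENNReal.ofReal (f k) := ENNReal.ofReal_tsum_of_nonneg hfnn hfsum
  · -- value at the optimum
    have hterm : ∀ k : ℕ,
        E * (t ^ k * b ^ k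
          / ((Real.exp (-c) * c ^ k / Nat.factorial k) * (Nat.factorial k : ℝ) ^ 2))
        = (E * S) * (c ^ k / (Nat.factorial k : ℝ)) := by
      intro k
      have hfk : (0:ℝ) < (Nat.factorial k : ℝ) := by positivity
      have hck : (0:ℝ) < c ^ k := pow_pos hcpos k
      rw [htb_pow k, hSdef, Real.exp_neg]
      field_simp
    calc (∑' k : ℕ, E * (t ^ k * b ^ k
          / ((Real.exp (-c) * c ^ k / Nat.factorial k) * (Nat.factorial k : ℝ) ^ 2)))
        = ∑' k : ℕ, (E * S) * (c ^ k / (Nat.factorial k : ℝ)) := by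
          exact tsum_congr hterm
      _ = (E * S) * S := by rw [tsum_mul_left, haS]
      _ = E * Real.exp (2 * c) := by rw [hS2]; ring
  · -- identity for the square
    have hsqrt : Real.sqrt t * Real.sqrt b = c := (Real.sqrt_mul ht.le b).symm
    have : (∑' k : ℕ, Real.sqrt t ^ k * Real.sqrt b ^ k / (Nat.factorial k : ℝ)) = S := by
      rw [← haS]
      exact tsum_congr fun k => by rw [← mul_pow, hsqrt]
    have hEeq : E = Real.exp (-(U * t)) ^ 2 := by
      rw [hEdef, sq, ← Real.exp_add]; ring_nf
    rw [this, hS2, mul_pow, ← hEeq]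
end

section
/- Second moment of the GPE with a Poisson proposal: assume U ≥ sup_{s∈[0,t]} h(s), and let p be the Poisson probability mass function with mean μt for some μ > 0, i.e. p(k) = e^{−μt}(μt)^k/k!. Then E[I²] = exp( −2Ut + μt + b/μ ), where b = ∫_0^t (U − h(s))² ds. Moreover, if b > 0, the map μ ↦ exp(−2Ut + μt + b/μ) on (0,∞) attains its minimum exp(−2Ut + 2√(tb)) at μ = √(b/t). -/
open scoped ENNReal


open MeasureTheory ProbabilityTheory Real Finset

/-- Second moment of the GPE with a Poisson proposal: assume
`U ≥ sup_{s ∈ [0,t]} h(s)` and let `κ` be Poisson with mean `μt` for some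
`μ > 0`, i.e. `p(k) = e^{-μt}(μt)^k / k!`. Then
`E[I²] = exp(-2Ut + μt + b/μ)` where `b = ∫_0^t (U - h(s))² ds`. Moreover, if
`b > 0`, the map `μ' ↦ exp(-2Ut + μ't + b/μ')` on `(0,∞)` attains its minimum
`exp(-2Ut + 2√(tb))` at `μ' = √(b/t)`. -/
theorem gpe_poisson_proposal_second_moment
    {Ω : Type*} [MeasurableSpace Ω] (P : Measure Ω) [IsProbabilityMeasure P]
    (t : ℝ) (ht : 0 < t)
    (h : ℝ → ℝ) (hmeas : Measurable h)
    (Ch : ℝ) (hbd : ∀ s ∈ Set.Icc (0 : ℝ) t, |h s| ≤ Ch)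
    (ψ : ℕ → Ω → ℝ) (hψmeas : ∀ j, Measurable (ψ j))
    (hψlaw : ∀ j, Measure.map (ψ j) P
      = (ENNReal.ofReal t)⁻¹ • volume.restrict (Set.Icc (0 : ℝ) t))
    (hψindep : iIndepFun ψ P)
    (κ : Ω → ℕ) (hκmeas : Measurable κ)
    (hκψindep : IndepFun κ (fun ω => fun j => ψ j ω) P)
    (μ : ℝ) (hμ : 0 < μ)
    (p : ℕ → ℝ)
    (hpdef : ∀ k : ℕ, p k = Real.exp (-(μ * t)) * (μ * t) ^ k / Nat.factorial k)
    (hκlaw : ∀ k : ℕ, P {ω | κ ω = k} = ENNReal.ofReal (p k))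
    (U : ℝ) (hU : ∀ s ∈ Set.Icc (0 : ℝ) t, h s ≤ U)
    (b : ℝ) (hb : b = ∫ s in (0 : ℝ)..t, (U - h s) ^ 2) :
    (∫⁻ ω, ENNReal.ofReal ((Real.exp (-(U * t)) * t ^ κ ω
          / (Nat.factorial (κ ω) * p (κ ω))
          * ∏ j ∈ Finset.range (κ ω), (U - h (ψ j ω))) ^ 2) ∂P
        = ENNReal.ofReal (Real.exp (-(2 * U * t) + μ * t + b / μ)))
      ∧ (0 < b →
          (∀ μ' : ℝ, 0 < μ' →
              Real.exp (-(2 * U * t) + 2 * Real.sqrt (t * b))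
                ≤ Real.exp (-(2 * U * t) + μ' * t + b / μ'))
            ∧ Real.exp (-(2 * U * t) + Real.sqrt (b / t) * t + b / Real.sqrt (b / t))
                = Real.exp (-(2 * U * t) + 2 * Real.sqrt (t * b))) := by
  have part1 : (∫⁻ ω, ENNReal.ofReal ((Real.exp (-(U * t)) * t ^ κ ω
        / (Nat.factorial (κ ω) * p (κ ω))
        * ∏ j ∈ Finset.range (κ ω), (U - h (ψ j ω))) ^ 2) ∂P
      = ENNReal.ofReal (Real.exp (-(2 * U * t) + μ * t + b / μ))) := by
    classical
    set F : ℝ → ℝ≥0∞ := fun s => ENNReal.ofReal ((U - h s) ^ 2) with hF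
    have hFmeas : Measurable F :=
      ENNReal.measurable_ofReal.comp ((measurable_const.sub hmeas).pow_const 2)
    have hbnn : 0 ≤ b := by
      rw [hb]
      apply intervalIntegral.integral_nonneg ht.le
      intro s _; positivity
    -- value of a single integral
    have hI0 : ∀ j, ∫⁻ ω, F (ψ j ω) ∂P = ENNReal.ofReal (b / t) := by
      intro j
      rw [← lintegral_map hFmeas (hψmeas j), hψlaw j, lintegral_smul_measure]
      have hChnn : (0:ℝ) ≤ Ch := le_trans (abs_nonneg _) (hbd 0 ⟨le_refl 0, ht.le⟩)
      have hint : Integrable (fun s => (U - h s) ^ 2)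
          (volume.restrict (Set.Icc (0:ℝ) t)) := by
        have hm : AEStronglyMeasurable (fun s => (U - h s) ^ 2)
            (volume.restrict (Set.Icc (0:ℝ) t)) :=
          ((measurable_const.sub hmeas).pow_const 2).aestronglyMeasurable
        refine Integrable.mono' (integrable_const ((|U| + Ch) ^ 2)) hm ?_
        rw [ae_restrict_iff' measurableSet_Icc]
        filter_upwards with s hs
        have h1 := hbd s hs
        have h2 : |h s| ≥ 0 := abs_nonneg _
        rw [Real.norm_eq_abs, abs_of_nonneg (by positivity : (0:ℝ) ≤ (U - h s)^2)]
        nlinarith [le_abs_self U, neg_abs_le U, le_abs_self (h s), neg_abs_le (h s)]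
      have h1 : ∫⁻ s in Set.Icc (0:ℝ) t, F s
          = ENNReal.ofReal (∫ s in Set.Icc (0:ℝ) t, (U - h s) ^ 2) := by
        rw [ofReal_integral_eq_lintegral_ofReal hint
          (ae_of_all _ fun s => by positivity)]
      rw [h1]
      have h2 : ∫ s in Set.Icc (0:ℝ) t, (U - h s) ^ 2 = b := by
        rw [hb, intervalIntegral.integral_of_le ht.le,
          ← MeasureTheory.integral_Icc_eq_integral_Ioc]
      rw [h2, ENNReal.ofReal_div_of_pos ht, div_eq_mul_inv, mul_comm, smul_eq_mul]
    -- iid product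
    set G : ℕ → Ω → ℝ≥0∞ := fun j ω => F (ψ j ω) with hG
    have hGmeas : ∀ j, Measurable (G j) := fun j => hFmeas.comp (hψmeas j)
    have hGindep : iIndepFun G P :=
      hψindep.comp (fun _ => F) (fun _ => hFmeas)
    have hprod : ∀ k, ∫⁻ ω, ∏ j ∈ Finset.range k, G j ω ∂P
        = ENNReal.ofReal (b / t) ^ k := by
      intro k
      induction k with
      | zero => simp
      | succ n ih =>
        have hmul := lintegral_mul_eq_lintegral_mul_lintegral_of_indepFun
          (μ := P) (f := ∏ j ∈ Finset.range n, G j) (g := G n)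
          (by rw [show (∏ j ∈ Finset.range n, G j) = fun ω => ∏ j ∈ Finset.range n, G j ω from funext fun ω => Finset.prod_apply ..]
              exact Finset.measurable_prod _ fun j _ => hGmeas j) (hGmeas n)
          (hGindep.indepFun_prod_range_succ hGmeas n)
        simp only [Finset.prod_apply, Pi.mul_apply] at hmul
        simp only [Finset.prod_range_succ]
        rw [hmul, ih, hI0 n, pow_succ]
    -- coefficient
    set c : ℕ → ℝ := fun k => Real.exp (-(U * t)) * t ^ k / (Nat.factorial k * p k) with hc
    have hpk : ∀ k : ℕ, 0 < p k := by
      intro k; rw [hpdef]; positivity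
    -- partition over values of κ
    have hmeasS : ∀ k : ℕ, MeasurableSet {ω | κ ω = k} :=
      fun k => hκmeas (measurableSet_singleton k)
    have hcover : (⋃ k : ℕ, {ω | κ ω = k}) = Set.univ := by
      ext ω; simp
    have hdisj : Pairwise (Function.onFun Disjoint fun k : ℕ => {ω | κ ω = k}) := by
      intro i j hij
      simp only [Function.onFun, Set.disjoint_left, Set.mem_setOf_eq]
      intro ω hi hj
      exact hij (hi.symm.trans hj)
    have hterm : ∀ k : ℕ, (∫⁻ ω in {ω | κ ω = k},
          ENNReal.ofReal ((c (κ ω) * ∏ j ∈ Finset.range (κ ω), (U - h (ψ j ω))) ^ 2) ∂P)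
        = ENNReal.ofReal (p k) * (ENNReal.ofReal (c k ^ 2) * ENNReal.ofReal (b / t) ^ k) := by
      intro k
      have step1 : (∫⁻ ω in {ω | κ ω = k},
            ENNReal.ofReal ((c (κ ω) * ∏ j ∈ Finset.range (κ ω), (U - h (ψ j ω))) ^ 2) ∂P)
          = ∫⁻ ω in {ω | κ ω = k},
              ENNReal.ofReal (c k ^ 2) * ∏ j ∈ Finset.range k, G j ω ∂P := by
        apply setLIntegral_congr_fun (hmeasS k)
        intro ω hω
        beta_reduce
        rw [show κ ω = k from hω, mul_pow, ← Finset.prod_pow,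
          ENNReal.ofReal_mul (sq_nonneg _),
          ENNReal.ofReal_prod_of_nonneg (fun i _ => sq_nonneg _)]
      rw [step1, ← lintegral_indicator (hmeasS k)]
      have hBmeas : Measurable (fun v : ℕ → ℝ => ∏ j ∈ Finset.range k, F (v j)) :=
        Finset.measurable_prod _ fun j _ => hFmeas.comp (measurable_pi_apply j)
      have step2 : ∀ ω, ({ω | κ ω = k}).indicator
            (fun ω => ENNReal.ofReal (c k ^ 2) * ∏ j ∈ Finset.range k, G j ω) ω
          = ENNReal.ofReal (c k ^ 2) *
              (((fun n : ℕ => if n = k then (1 : ℝ≥0∞) else 0) ∘ κ) ω *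
                ((fun v : ℕ → ℝ => ∏ j ∈ Finset.range k, F (v j)) ∘ fun ω j => ψ j ω) ω) := by
        intro ω
        simp only [Set.indicator_apply, Set.mem_setOf_eq, Function.comp_apply]
        by_cases hω : κ ω = k <;> simp [hω, hG]
      simp only [step2]
      rw [lintegral_const_mul _ (f := fun ω => ((fun n : ℕ => if n = k then (1 : ℝ≥0∞) else 0) ∘ κ) ω *
          ((fun v : ℕ → ℝ => ∏ j ∈ Finset.range k, F (v j)) ∘ fun ω j => ψ j ω) ω) (((measurable_from_nat).comp hκmeas).mul
        (hBmeas.comp (measurable_pi_lambda _ fun j => hψmeas j)))]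
      have hindep2 : IndepFun ((fun n : ℕ => if n = k then (1 : ℝ≥0∞) else 0) ∘ κ)
          ((fun v : ℕ → ℝ => ∏ j ∈ Finset.range k, F (v j)) ∘ fun ω j => ψ j ω) P :=
        hκψindep.comp measurable_from_nat hBmeas
      rw [lintegral_mul_eq_lintegral_mul_lintegral_of_indepFun''
        ((measurable_from_nat.comp hκmeas).aemeasurable)
        ((hBmeas.comp (measurable_pi_lambda _ fun j => hψmeas j)).aemeasurable) hindep2]
      have hu : ∫⁻ ω, ((fun n : ℕ => if n = k then (1 : ℝ≥0∞) else 0) ∘ κ) ω ∂P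
          = ENNReal.ofReal (p k) := by
        have heq : ((fun n : ℕ => if n = k then (1 : ℝ≥0∞) else 0) ∘ κ)
            = ({ω | κ ω = k}).indicator (fun _ => 1) := by
          funext ω
          simp only [Function.comp_apply, Set.indicator_apply, Set.mem_setOf_eq]
        rw [heq, lintegral_indicator_const (hmeasS k), one_mul, hκlaw]
      have hv : ∫⁻ ω, ((fun v : ℕ → ℝ => ∏ j ∈ Finset.range k, F (v j)) ∘ fun ω j => ψ j ω) ω ∂P
          = ENNReal.ofReal (b / t) ^ k := by
        simpa [hG] using hprod k
      rw [hu, hv]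
      ring
    have hterm2 : ∀ k : ℕ, ENNReal.ofReal (p k) *
          (ENNReal.ofReal (c k ^ 2) * ENNReal.ofReal (b / t) ^ k)
        = ENNReal.ofReal (Real.exp (-(2 * U * t) + μ * t)
            * ((b / μ) ^ k / Nat.factorial k)) := by
      intro k
      rw [← ENNReal.ofReal_pow (by positivity), ← ENNReal.ofReal_mul (sq_nonneg _),
        ← ENNReal.ofReal_mul (hpk k).le]
      congr 1
      have hE : Real.exp (-(2 * U * t) + μ * t)
          = Real.exp (μ * t) * (Real.exp (-(U * t)) * Real.exp (-(U * t))) := by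
        rw [← Real.exp_add, ← Real.exp_add]
        ring_nf
      rw [hc]
      simp only
      rw [hpdef k, hE, Real.exp_neg (μ * t)]
      have h1 : Real.exp (μ * t) ≠ 0 := (Real.exp_pos _).ne'
      have h2 : (Nat.factorial k : ℝ) ≠ 0 := Nat.cast_ne_zero.mpr (Nat.factorial_ne_zero k)
      have h3 : μ * t ≠ 0 := by positivity
      field_simp
      have ht0 : t ≠ 0 := ht.ne'
      have hμ0 : μ ≠ 0 := hμ.ne'
      rw [div_pow, div_pow, mul_pow]
      field_simp
    have hbμ : 0 ≤ b / μ := div_nonneg hbnn hμ.le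
    have key : (∫⁻ ω, ENNReal.ofReal
          ((c (κ ω) * ∏ j ∈ Finset.range (κ ω), (U - h (ψ j ω))) ^ 2) ∂P)
        = ENNReal.ofReal (Real.exp (-(2 * U * t) + μ * t + b / μ)) := by
      calc (∫⁻ ω, ENNReal.ofReal
            ((c (κ ω) * ∏ j ∈ Finset.range (κ ω), (U - h (ψ j ω))) ^ 2) ∂P)
          = ∫⁻ ω in ⋃ k : ℕ, {ω | κ ω = k}, ENNReal.ofReal
              ((c (κ ω) * ∏ j ∈ Finset.range (κ ω), (U - h (ψ j ω))) ^ 2) ∂P := by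
            rw [hcover, Measure.restrict_univ]
        _ = ∑' k : ℕ, ∫⁻ ω in {ω | κ ω = k}, ENNReal.ofReal
              ((c (κ ω) * ∏ j ∈ Finset.range (κ ω), (U - h (ψ j ω))) ^ 2) ∂P :=
            lintegral_iUnion hmeasS hdisj _
        _ = ∑' k : ℕ, ENNReal.ofReal (Real.exp (-(2 * U * t) + μ * t)
              * ((b / μ) ^ k / Nat.factorial k)) := by
            refine tsum_congr fun k => ?_
            rw [hterm k, hterm2 k]
        _ = ENNReal.ofReal (∑' k : ℕ, Real.exp (-(2 * U * t) + μ * t)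
              * ((b / μ) ^ k / Nat.factorial k)) := by
            rw [ENNReal.ofReal_tsum_of_nonneg
              (fun k => mul_nonneg (Real.exp_pos _).le
                (div_nonneg (pow_nonneg hbμ k) (Nat.cast_nonneg _)))
              ((Real.summable_pow_div_factorial (b / μ)).mul_left _)]
        _ = ENNReal.ofReal (Real.exp (-(2 * U * t) + μ * t + b / μ)) := by
            congr 1
            rw [tsum_mul_left]
            have hexp : ∑' k : ℕ, (b / μ) ^ k / (Nat.factorial k : ℝ)
                = Real.exp (b / μ) := by
              rw [Real.exp_eq_exp_ℝ, NormedSpace.exp_eq_tsum_div]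
            rw [hexp, ← Real.exp_add]
    simpa only [hc] using key
  refine ⟨part1, fun hbp => ⟨fun μ' hμ' => ?_, ?_⟩⟩
  · rw [Real.exp_le_exp]
    have e1 : Real.sqrt (μ' * t) * Real.sqrt (b / μ') = Real.sqrt (t * b) := by
      rw [← Real.sqrt_mul (by positivity)]
      congr 1
      field_simp
    have e2 : Real.sqrt (μ' * t) ^ 2 = μ' * t := Real.sq_sqrt (by positivity)
    have e3 : Real.sqrt (b / μ') ^ 2 = b / μ' := Real.sq_sqrt (by positivity)
    nlinarith [sq_nonneg (Real.sqrt (μ' * t) - Real.sqrt (b / μ'))]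
  · congr 1
    have hsb : Real.sqrt b * Real.sqrt b = b := Real.mul_self_sqrt hbp.le
    have hst : Real.sqrt t * Real.sqrt t = t := Real.mul_self_sqrt ht.le
    have h1 : Real.sqrt (b / t) = Real.sqrt b / Real.sqrt t := Real.sqrt_div' b ht.le
    have h2 : Real.sqrt (t * b) = Real.sqrt t * Real.sqrt b := Real.sqrt_mul ht.le b
    have hbne : Real.sqrt b ≠ 0 := by positivity
    have htne : Real.sqrt t ≠ 0 := by positivity
    rw [h1, h2]
    field_simp
    nlinarith [hsb, hst]
end

section
/- Second moment of the Poisson Estimator (conditional on the path): if κ has the Poisson distribution with mean λt for some λ > 0 and c ∈ ℝ is arbitrary, then the Poisson Estimator PE = e^{(λ−c)t} · λ^{−κ} · ∏_{j=1}^{κ} (c − h(ψ_j)) satisfies E[PE²] = exp( (λ − 2c)t + (1/λ) ∫_0^t (c − h(s))² ds ). -/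
open MeasureTheory ProbabilityTheory Real Finset
open scoped ENNReal

/-- Second moment of the Poisson Estimator (conditional on the path): if `κ`
is Poisson with mean `λt` for some `λ > 0` and `c` is arbitrary, then
`PE = e^{(λ-c)t} λ^{-κ} ∏_{j=1}^{κ} (c - h(ψ_j))` satisfies
`E[PE²] = exp((λ - 2c)t + (1/λ) ∫_0^t (c - h(s))² ds)`, where the `ψ_j` are
i.i.d. uniform on `[0,t]`, independent of `κ`. -/
theorem poisson_estimator_second_moment
    {Ω : Type*} [MeasurableSpace Ω] (P : Measure Ω) [IsProbabilityMeasure P]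
    (t : ℝ) (ht : 0 < t)
    (h : ℝ → ℝ) (hmeas : Measurable h)
    (Ch : ℝ) (hbd : ∀ s ∈ Set.Icc (0 : ℝ) t, |h s| ≤ Ch)
    (ψ : ℕ → Ω → ℝ) (hψmeas : ∀ j, Measurable (ψ j))
    (hψlaw : ∀ j, Measure.map (ψ j) P
      = (ENNReal.ofReal t)⁻¹ • volume.restrict (Set.Icc (0 : ℝ) t))
    (hψindep : iIndepFun ψ P)
    (κ : Ω → ℕ) (hκmeas : Measurable κ)
    (hκψindep : IndepFun κ (fun ω => fun j => ψ j ω) P)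
    (lam c : ℝ) (hlam : 0 < lam)
    (hκlaw : ∀ k : ℕ, P {ω | κ ω = k}
      = ENNReal.ofReal (Real.exp (-(lam * t)) * (lam * t) ^ k / Nat.factorial k)) :
    ∫⁻ ω, ENNReal.ofReal ((Real.exp ((lam - c) * t) * (lam ^ κ ω)⁻¹
        * ∏ j ∈ Finset.range (κ ω), (c - h (ψ j ω))) ^ 2) ∂P
      = ENNReal.ofReal (Real.exp ((lam - 2 * c) * t
          + (1 / lam) * ∫ s in (0 : ℝ)..t, (c - h s) ^ 2)) := by
  classical
  set I : ℝ := ∫ s in (0 : ℝ)..t, (c - h s) ^ 2 with hIdef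
  have hInn : 0 ≤ I := intervalIntegral.integral_nonneg ht.le fun s _ => sq_nonneg _
  -- the single-factor functions
  set F : ℝ → ℝ≥0∞ := fun x => ENNReal.ofReal ((c - h x) ^ 2) with hFdef
  have hFmeas : Measurable F := by
    apply ENNReal.measurable_ofReal.comp
    exact ((measurable_const.sub hmeas).pow_const 2)
  set φ : ℕ → Ω → ℝ≥0∞ := fun j ω => F (ψ j ω) with hφdef
  have hφmeas : ∀ j, Measurable (φ j) := fun j => hFmeas.comp (hψmeas j)
  have hφindep : iIndepFun φ P :=
    hψindep.comp (fun _ => F) (fun _ => hFmeas)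
  -- integrability of (c - h)^2 on [0,t]
  have hChnn : 0 ≤ Ch := (abs_nonneg _).trans (hbd 0 ⟨le_refl 0, ht.le⟩)
  have hint : Integrable (fun x => (c - h x) ^ 2) (volume.restrict (Set.Icc (0:ℝ) t)) := by
    refine Integrable.mono' (integrable_const ((|c| + Ch) ^ 2))
      (((measurable_const.sub hmeas).pow_const 2).aestronglyMeasurable) ?_
    filter_upwards [ae_restrict_mem measurableSet_Icc] with x hx
    rw [Real.norm_eq_abs, abs_of_nonneg (sq_nonneg _)]
    have h1 : |c - h x| ≤ |c| + Ch := (abs_sub _ _).trans (by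
      have := hbd x hx; linarith)
    calc (c - h x) ^ 2 = |c - h x| ^ 2 := (sq_abs _).symm
      _ ≤ (|c| + Ch) ^ 2 := by
          apply pow_le_pow_left₀ (abs_nonneg _) h1
  -- value of a single lintegral
  have hIIcc : ∫ x in Set.Icc (0:ℝ) t, (c - h x) ^ 2 = I := by
    rw [hIdef, intervalIntegral.integral_of_le ht.le, MeasureTheory.integral_Icc_eq_integral_Ioc]
  have hφint : ∀ j, ∫⁻ ω, φ j ω ∂P = ENNReal.ofReal (t⁻¹ * I) := by
    intro j
    have : ∫⁻ ω, φ j ω ∂P = ∫⁻ x, F x ∂(Measure.map (ψ j) P) :=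
      (lintegral_map hFmeas (hψmeas j)).symm
    rw [this, hψlaw j, lintegral_smul_measure]
    rw [← ofReal_integral_eq_lintegral_ofReal hint
      (ae_of_all _ fun x => sq_nonneg _)]
    rw [hIIcc, ENNReal.ofReal_mul (inv_nonneg.mpr ht.le), ENNReal.ofReal_inv_of_pos ht, smul_eq_mul]
  -- product lintegral
  have hprod : ∀ k : ℕ, ∫⁻ ω, ∏ j ∈ Finset.range k, φ j ω ∂P
      = ENNReal.ofReal (t⁻¹ * I) ^ k := by
    intro k
    induction k with
    | zero => simp
    | succ n ih =>
      have hind : IndepFun (∏ j ∈ Finset.range n, φ j) (φ n) P :=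
        hφindep.indepFun_prod_range_succ hφmeas n
      have hind' : IndepFun (fun a => ∏ j ∈ Finset.range n, φ j a) (φ n) P := by
        simpa [Finset.prod_fn] using hind
      have hmulint := lintegral_mul_eq_lintegral_mul_lintegral_of_indepFun
        (Finset.measurable_prod (Finset.range n) fun j _ => hφmeas j) (hφmeas n) hind'
      simp only [Pi.mul_apply, Finset.prod_apply] at hmulint
      simp only [Finset.prod_range_succ]
      rw [hmulint, ih, hφint n, pow_succ]
  -- partition sets
  set S : ℕ → Set Ω := fun k => {ω | κ ω = k} with hSdef
  have hSmeas : ∀ k, MeasurableSet (S k) := fun k => hκmeas (measurableSet_singleton k)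
  have hSdisj : Pairwise (Function.onFun Disjoint S) := by
    intro i j hij
    simp only [Function.onFun, Set.disjoint_left]
    rintro ω (hi : κ ω = i) (hj : κ ω = j)
    exact hij (hi ▸ hj ▸ rfl)
  have hSunion : (⋃ k, S k) = Set.univ := by
    ext ω; simp [hSdef]
  set PE : Ω → ℝ≥0∞ := fun ω => ENNReal.ofReal ((Real.exp ((lam - c) * t) * (lam ^ κ ω)⁻¹
        * ∏ j ∈ Finset.range (κ ω), (c - h (ψ j ω))) ^ 2) with hPEdef
  -- per-piece value
  have hpiece : ∀ k : ℕ, ∫⁻ ω in S k, PE ω ∂P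
      = ENNReal.ofReal (Real.exp ((lam - 2 * c) * t) * ((I / lam) ^ k / Nat.factorial k)) := by
    intro k
    set a : ℝ≥0∞ := ENNReal.ofReal ((Real.exp ((lam - c) * t) * (lam ^ k)⁻¹) ^ 2) with hadef
    have hstep1 : ∫⁻ ω in S k, PE ω ∂P
        = ∫⁻ ω in S k, a * ∏ j ∈ Finset.range k, φ j ω ∂P := by
      refine setLIntegral_congr_fun (hSmeas k) (fun ω hω => ?_)
      have hκω : κ ω = k := hω
      rw [hPEdef]
      simp only [hκω]
      rw [mul_pow, ← Finset.prod_pow,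
        ENNReal.ofReal_mul (sq_nonneg _),
        ENNReal.ofReal_prod_of_nonneg (fun i _ => sq_nonneg _)]
    rw [hstep1, lintegral_const_mul' _ _ ENNReal.ofReal_ne_top]
    -- independence step
    set u : ℕ → ℝ≥0∞ := fun n => if n = k then 1 else 0 with hudef
    set v : (ℕ → ℝ) → ℝ≥0∞ := fun x => ∏ j ∈ Finset.range k, F (x j) with hvdef
    have humeas : Measurable u := measurable_from_top
    have hvmeas : Measurable v := by
      apply Finset.measurable_prod
      intro j _
      exact hFmeas.comp (measurable_pi_apply j)
    set Ψ : Ω → ℕ → ℝ := fun ω j => ψ j ω with hΨdef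
    have hΨmeas : Measurable Ψ := measurable_pi_lambda _ fun j => hψmeas j
    have hUV : IndepFun (u ∘ κ) (v ∘ Ψ) P := hκψindep.comp humeas hvmeas
    have key : ∫⁻ ω in S k, ∏ j ∈ Finset.range k, φ j ω ∂P
        = P (S k) * ENNReal.ofReal (t⁻¹ * I) ^ k := by
      have h1 : ∫⁻ ω in S k, ∏ j ∈ Finset.range k, φ j ω ∂P
          = ∫⁻ ω, ((u ∘ κ) * (v ∘ Ψ)) ω ∂P := by
        rw [← lintegral_indicator (hSmeas k)]
        congr 1
        ext ω
        by_cases hω : ω ∈ S k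
        · have hκω : κ ω = k := hω
          simp [Set.indicator_of_mem hω, hudef, hκω, hvdef, hΨdef, hφdef]
        · have hκω : κ ω ≠ k := hω
          simp [Set.indicator_of_notMem hω, hudef, hκω]
      rw [h1, lintegral_mul_eq_lintegral_mul_lintegral_of_indepFun
        (humeas.comp hκmeas) (hvmeas.comp hΨmeas) hUV]
      congr 1
      · have h2 : (u ∘ κ) = (S k).indicator (1 : Ω → ℝ≥0∞) := by
          ext ω
          by_cases hω : ω ∈ S k
          · have hκω : κ ω = k := hω
            simp [Set.indicator_of_mem hω, hudef, hκω]
          · have hκω : κ ω ≠ k := hω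
            simp [Set.indicator_of_notMem hω, hudef, hκω]
        rw [h2, lintegral_indicator_one (hSmeas k)]
      · have h3 : (v ∘ Ψ) = fun ω => ∏ j ∈ Finset.range k, φ j ω := rfl
        rw [h3, hprod k]
    have hPSk : P (S k)
        = ENNReal.ofReal (Real.exp (-(lam * t)) * (lam * t) ^ k / Nat.factorial k) := hκlaw k
    rw [key, hPSk, ← ENNReal.ofReal_pow (by positivity),
      ← ENNReal.ofReal_mul (by positivity), ← ENNReal.ofReal_mul (by positivity)]
    congr 1
    have hl0 : lam ≠ 0 := hlam.ne'
    have ht0 : t ≠ 0 := ht.ne'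
    have hfk0 : (Nat.factorial k : ℝ) ≠ 0 := by positivity
    have hexp2 : (Real.exp ((lam - c) * t)) ^ 2 = Real.exp (2 * ((lam - c) * t)) := by
      rw [← Real.exp_nat_mul]; norm_num
    have key2 : Real.exp ((lam - 2 * c) * t)
        = Real.exp (-(lam * t)) * (Real.exp ((lam - c) * t)) ^ 2 := by
      rw [hexp2, ← Real.exp_add]; congr 1; ring
    rw [key2]
    field_simp
    linear_combination (lam ^ k * I ^ k) * mul_inv_cancel₀ (pow_ne_zero k ht0) - (lam ^ k * I ^ k) * mul_inv_cancel₀ (pow_ne_zero k hl0)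
  -- assemble
  have hmain : ∫⁻ ω, PE ω ∂P = ∑' k, ∫⁻ ω in S k, PE ω ∂P := by
    rw [← lintegral_iUnion hSmeas hSdisj, hSunion, Measure.restrict_univ]
  rw [show (∫⁻ ω, ENNReal.ofReal ((Real.exp ((lam - c) * t) * (lam ^ κ ω)⁻¹
        * ∏ j ∈ Finset.range (κ ω), (c - h (ψ j ω))) ^ 2) ∂P) = ∫⁻ ω, PE ω ∂P from rfl,
    hmain]
  have hsummable : Summable (fun k : ℕ =>
      Real.exp ((lam - 2 * c) * t) * ((I / lam) ^ k / Nat.factorial k)) :=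
    (Real.summable_pow_div_factorial (I / lam)).mul_left _
  calc ∑' k, ∫⁻ ω in S k, PE ω ∂P
      = ∑' k, ENNReal.ofReal (Real.exp ((lam - 2 * c) * t)
          * ((I / lam) ^ k / Nat.factorial k)) := tsum_congr hpiece
    _ = ENNReal.ofReal (∑' k, Real.exp ((lam - 2 * c) * t)
          * ((I / lam) ^ k / Nat.factorial k)) :=
        (ENNReal.ofReal_tsum_of_nonneg (fun k => by positivity) hsummable).symm
    _ = ENNReal.ofReal (Real.exp ((lam - 2 * c) * t + 1 / lam * I)) := by
        congr 1
        rw [tsum_mul_left, Real.exp_add]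
        congr 1
        rw [Real.exp_eq_exp_ℝ, NormedSpace.exp_eq_tsum_div]
        congr 1
        ext k
        rw [one_div, inv_mul_eq_div, div_pow]
end

section
/- Almost-sure bound for GPE-1 (key step of Theorem 2): suppose L, U ∈ ℝ with L < U and L ≤ h(s) ≤ U for all s ∈ [0,t], and let p be the Poisson probability mass function with mean (U−L)t. Then the GPE-1 estimator satisfies I = e^{−Lt} · ∏_{j=1}^{κ} ( (U − h(ψ_j)) / (U − L) ) almost surely, hence 0 ≤ I ≤ e^{−Lt} almost surely, and consequently E[I²] ≤ e^{−2Lt}. -/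
open MeasureTheory ProbabilityTheory Real Finset

/-- Almost-sure bound for GPE-1 (key step of Theorem 2): suppose `L < U` and
`L ≤ h(s) ≤ U` for all `s ∈ [0,t]`, and let `p` be the Poisson probability mass
function with mean `(U-L)t`. Then the GPE-1 estimator
`I = e^{-Ut} (t^κ / (κ! p(κ))) ∏_{j=1}^{κ} (U - h(ψ_j))` satisfies
`I = e^{-Lt} ∏_{j=1}^{κ} ((U - h(ψ_j)) / (U - L))` almost surely, hence
`0 ≤ I ≤ e^{-Lt}` almost surely, and consequently `E[I²] ≤ e^{-2Lt}`. -/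
theorem gpe1_almost_sure_bound
    {Ω : Type*} [MeasurableSpace Ω] (P : Measure Ω) [IsProbabilityMeasure P]
    (t : ℝ) (ht : 0 < t)
    (h : ℝ → ℝ) (hmeas : Measurable h)
    (ψ : ℕ → Ω → ℝ) (hψmeas : ∀ j, Measurable (ψ j))
    (hψlaw : ∀ j, Measure.map (ψ j) P
      = (ENNReal.ofReal t)⁻¹ • volume.restrict (Set.Icc (0 : ℝ) t))
    (hψindep : iIndepFun ψ P)
    (κ : Ω → ℕ) (hκmeas : Measurable κ)
    (hκψindep : IndepFun κ (fun ω => fun j => ψ j ω) P)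
    (L U : ℝ) (hLU : L < U)
    (hbd : ∀ s ∈ Set.Icc (0 : ℝ) t, L ≤ h s ∧ h s ≤ U)
    (p : ℕ → ℝ)
    (hpdef : ∀ k : ℕ, p k
      = Real.exp (-((U - L) * t)) * ((U - L) * t) ^ k / Nat.factorial k)
    (hκlaw : ∀ k : ℕ, P {ω | κ ω = k} = ENNReal.ofReal (p k))
    (I : Ω → ℝ)
    (hIdef : ∀ ω, I ω = Real.exp (-(U * t)) * t ^ κ ω
        / (Nat.factorial (κ ω) * p (κ ω))
        * ∏ j ∈ Finset.range (κ ω), (U - h (ψ j ω))) :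
    (∀ᵐ ω ∂P, I ω = Real.exp (-(L * t))
        * ∏ j ∈ Finset.range (κ ω), ((U - h (ψ j ω)) / (U - L)))
      ∧ (∀ᵐ ω ∂P, 0 ≤ I ω ∧ I ω ≤ Real.exp (-(L * t)))
      ∧ ∫⁻ ω, ENNReal.ofReal ((I ω) ^ 2) ∂P
          ≤ ENNReal.ofReal (Real.exp (-(2 * L * t))) := by
  have hUL : (0 : ℝ) < U - L := sub_pos.mpr hLU
  -- the identity holds pointwise (deterministic algebra)
  have hid : ∀ ω, I ω = Real.exp (-(L * t))
      * ∏ j ∈ Finset.range (κ ω), ((U - h (ψ j ω)) / (U - L)) := by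
    intro ω
    rw [hIdef ω, hpdef (κ ω), Finset.prod_div_distrib, Finset.prod_const, Finset.card_range]
    have hfac : (0 : ℝ) < (Nat.factorial (κ ω) : ℝ) := by
      exact_mod_cast Nat.factorial_pos _
    have hexp : Real.exp (-((U - L) * t)) ≠ 0 := Real.exp_ne_zero _
    have hULt : ((U - L) * t) ^ κ ω ≠ 0 := pow_ne_zero _ (by positivity)
    have ht' : (t : ℝ) ^ κ ω ≠ 0 := pow_ne_zero _ ht.ne'
    have hkey : Real.exp (-(U * t))
        = Real.exp (-(L * t)) * Real.exp (-((U - L) * t)) := by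
      rw [← Real.exp_add]; ring_nf
    field_simp
    rw [hkey, mul_pow]; ring
  -- almost surely each ψ j lands in [0, t]
  have hIcc : ∀ᵐ ω ∂P, ∀ j, ψ j ω ∈ Set.Icc (0 : ℝ) t := by
    rw [ae_all_iff]
    intro j
    have hms : MeasurableSet (Set.Icc (0 : ℝ) t) := measurableSet_Icc
    have : P ((ψ j) ⁻¹' (Set.Icc (0 : ℝ) t)ᶜ) = 0 := by
      rw [← Measure.map_apply (hψmeas j) hms.compl, hψlaw j]
      simp [Measure.restrict_apply hms.compl]
    exact this
  have hprod : ∀ᵐ ω ∂P,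
      0 ≤ (∏ j ∈ Finset.range (κ ω), ((U - h (ψ j ω)) / (U - L)))
      ∧ (∏ j ∈ Finset.range (κ ω), ((U - h (ψ j ω)) / (U - L))) ≤ 1 := by
    filter_upwards [hIcc] with ω hω
    constructor
    · refine Finset.prod_nonneg fun j _ => div_nonneg ?_ hUL.le
      exact sub_nonneg.mpr (hbd _ (hω j)).2
    · refine Finset.prod_le_one (fun j _ => div_nonneg
        (sub_nonneg.mpr (hbd _ (hω j)).2) hUL.le) fun j _ => ?_
      rw [div_le_one hUL]
      have := (hbd _ (hω j)).1
      linarith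
  have hbnd : ∀ᵐ ω ∂P, 0 ≤ I ω ∧ I ω ≤ Real.exp (-(L * t)) := by
    filter_upwards [hprod] with ω ⟨h0, h1⟩
    rw [hid ω]
    constructor
    · exact mul_nonneg (Real.exp_nonneg _) h0
    · calc Real.exp (-(L * t)) * _ ≤ Real.exp (-(L * t)) * 1 :=
          mul_le_mul_of_nonneg_left h1 (Real.exp_nonneg _)
        _ = Real.exp (-(L * t)) := mul_one _
  refine ⟨Filter.Eventually.of_forall hid, hbnd, ?_⟩
  have hsq : ∀ᵐ ω ∂P, ENNReal.ofReal ((I ω) ^ 2)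
      ≤ ENNReal.ofReal (Real.exp (-(2 * L * t))) := by
    filter_upwards [hbnd] with ω ⟨h0, h1⟩
    apply ENNReal.ofReal_le_ofReal
    have : (I ω) ^ 2 ≤ Real.exp (-(L * t)) ^ 2 :=
      pow_le_pow_left₀ h0 h1 2
    calc (I ω) ^ 2 ≤ Real.exp (-(L * t)) ^ 2 := this
      _ = Real.exp (-(2 * L * t)) := by
          rw [sq, ← Real.exp_add]; ring_nf
  calc ∫⁻ ω, ENNReal.ofReal ((I ω) ^ 2) ∂P
      ≤ ∫⁻ _, ENNReal.ofReal (Real.exp (-(2 * L * t))) ∂P :=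
        lintegral_mono_ae hsq
    _ = ENNReal.ofReal (Real.exp (-(2 * L * t))) := by simp
end

section
/- Unbiasedness of GPE-2 (conditional on the path): let β > 0 and γ > 0, and let κ have the negative binomial probability mass function with mean γ and dispersion β, i.e. p(k) = ( Γ(β+k) / (Γ(β) k!) ) · ( β/(β+γ) )^{β} · ( γ/(β+γ) )^{k} for k ∈ ℕ. If U ≥ sup_{s∈[0,t]} h(s), then E[ e^{−Ut} · ( t^{κ} Γ(β) (β+γ)^{β+κ} ) / ( Γ(β+κ) β^{β} γ^{κ} ) · ∏_{j=1}^{κ} (U − h(ψ_j)) ] = exp( −∫_0^t h(s) ds ). -/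
open MeasureTheory ProbabilityTheory Real Finset

/-- Scalar arithmetic: the normalising constant of GPE-2 times the negative binomial
pmf collapses to a Poisson-type weight. -/
lemma gpe2_scalar (β γ t U : ℝ) (hβ : 0 < β) (hγ : 0 < γ) (k : ℕ) :
    (Real.exp (-(U * t)) * (t ^ k * Real.Gamma β * (β + γ) ^ (β + (k : ℝ)))
        / (Real.Gamma (β + (k : ℝ)) * β ^ β * γ ^ k))
      * ((Real.Gamma (β + (k : ℝ)) / (Real.Gamma β * Nat.factorial k))
          * (β / (β + γ)) ^ β * (γ / (β + γ)) ^ k)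
    = Real.exp (-(U * t)) * (t ^ k / Nat.factorial k) := by
  have hβγ : (0 : ℝ) < β + γ := by positivity
  have e1 : (β + γ) ^ (β + (k : ℝ)) = (β + γ) ^ β * (β + γ) ^ k := by
    rw [Real.rpow_add hβγ, Real.rpow_natCast]
  have e2 : (β / (β + γ)) ^ β = β ^ β / (β + γ) ^ β := Real.div_rpow hβ.le hβγ.le β
  have e3 : (γ / (β + γ)) ^ k = γ ^ k / (β + γ) ^ k := div_pow γ (β + γ) k
  have n1 : Real.Gamma β ≠ 0 := (Real.Gamma_pos_of_pos hβ).ne'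
  have n2 : Real.Gamma (β + (k : ℝ)) ≠ 0 :=
    (Real.Gamma_pos_of_pos (by positivity)).ne'
  have n3 : β ^ β ≠ 0 := (Real.rpow_pos_of_pos hβ β).ne'
  have n4 : (β + γ) ^ β ≠ 0 := (Real.rpow_pos_of_pos hβγ β).ne'
  have n5 : γ ^ k ≠ 0 := (pow_pos hγ k).ne'
  have n6 : ((β + γ) : ℝ) ^ k ≠ 0 := (pow_pos hβγ k).ne'
  have n7 : (Nat.factorial k : ℝ) ≠ 0 := Nat.cast_ne_zero.2 (Nat.factorial_ne_zero k)
  rw [e1, e2, e3]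
  field_simp

/-- Unbiasedness of GPE-2 (conditional on the path): let `β, γ > 0` and let `κ`
have the negative binomial probability mass function with mean `γ` and
dispersion `β`, i.e. `p(k) = (Γ(β+k) / (Γ(β) k!)) (β/(β+γ))^β (γ/(β+γ))^k`.
If `U ≥ sup_{s ∈ [0,t]} h(s)`, then
`E[ e^{-Ut} (t^κ Γ(β) (β+γ)^{β+κ}) / (Γ(β+κ) β^β γ^κ) ∏_{j=1}^{κ} (U - h(ψ_j)) ]
  = exp(-∫_0^t h(s) ds)`,
where the `ψ_j` are i.i.d. uniform on `[0,t]`, independent of `κ`. -/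
theorem gpe2_unbiased
    {Ω : Type*} [MeasurableSpace Ω] (P : Measure Ω) [IsProbabilityMeasure P]
    (t : ℝ) (ht : 0 < t)
    (h : ℝ → ℝ) (hmeas : Measurable h)
    (Ch : ℝ) (hbd : ∀ s ∈ Set.Icc (0 : ℝ) t, |h s| ≤ Ch)
    (ψ : ℕ → Ω → ℝ) (hψmeas : ∀ j, Measurable (ψ j))
    (hψlaw : ∀ j, Measure.map (ψ j) P
      = (ENNReal.ofReal t)⁻¹ • volume.restrict (Set.Icc (0 : ℝ) t))
    (hψindep : iIndepFun ψ P)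
    (κ : Ω → ℕ) (hκmeas : Measurable κ)
    (hκψindep : IndepFun κ (fun ω => fun j => ψ j ω) P)
    (β γ : ℝ) (hβ : 0 < β) (hγ : 0 < γ)
    (hκlaw : ∀ k : ℕ, P {ω | κ ω = k}
      = ENNReal.ofReal ((Real.Gamma (β + k) / (Real.Gamma β * Nat.factorial k))
          * (β / (β + γ)) ^ β * (γ / (β + γ)) ^ k))
    (U : ℝ) (hU : ∀ s ∈ Set.Icc (0 : ℝ) t, h s ≤ U) :
    ∫ ω, Real.exp (-(U * t))
        * (t ^ κ ω * Real.Gamma β * (β + γ) ^ (β + (κ ω : ℝ)))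
        / (Real.Gamma (β + (κ ω : ℝ)) * β ^ β * γ ^ κ ω)
        * ∏ j ∈ Finset.range (κ ω), (U - h (ψ j ω)) ∂P
      = Real.exp (-∫ s in (0 : ℝ)..t, h s) := by
  have hIcc : MeasurableSet (Set.Icc (0 : ℝ) t) := measurableSet_Icc
  -- the normalising constants
  set C : ℕ → ℝ := fun k => Real.exp (-(U * t))
      * (t ^ k * Real.Gamma β * (β + γ) ^ (β + (k : ℝ)))
      / (Real.Gamma (β + (k : ℝ)) * β ^ β * γ ^ k) with hC_def
  have hCpos : ∀ k, 0 < C k := by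
    intro k
    have h1 : 0 < Real.Gamma (β + (k : ℝ)) := Real.Gamma_pos_of_pos (by positivity)
    have h2 : 0 < Real.Gamma β := Real.Gamma_pos_of_pos hβ
    have h3 : (0:ℝ) < β + γ := by positivity
    have h4 : 0 < (β + γ) ^ (β + (k : ℝ)) := Real.rpow_pos_of_pos h3 _
    have h5 : 0 < β ^ β := Real.rpow_pos_of_pos hβ β
    have h6 : 0 < γ ^ k := pow_pos hγ k
    have h7 : 0 < t ^ k := pow_pos ht k
    have := Real.exp_pos (-(U * t))
    positivity
  set p : ℕ → ℝ := fun k => (Real.Gamma (β + k) / (Real.Gamma β * Nat.factorial k))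
      * (β / (β + γ)) ^ β * (γ / (β + γ)) ^ k with hp_def
  have hppos : ∀ k, 0 ≤ p k := by
    intro k
    have h1 : 0 ≤ Real.Gamma (β + (k : ℝ)) := (Real.Gamma_pos_of_pos (by positivity)).le
    have h2 : (0:ℝ) < Real.Gamma β := Real.Gamma_pos_of_pos hβ
    have h3 : (0:ℝ) < β + γ := by positivity
    have h4 : (0:ℝ) < Nat.factorial k := by positivity
    have h5 : 0 ≤ (β / (β + γ)) ^ β := Real.rpow_nonneg (by positivity) β
    have h6 : (0:ℝ) ≤ (γ / (β + γ)) ^ k := pow_nonneg (by positivity) k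
    positivity
  -- the integrand
  set f : Ω → ℝ := fun ω => C (κ ω) * ∏ j ∈ Finset.range (κ ω), (U - h (ψ j ω)) with hf_def
  have hgoal_f : (fun ω => Real.exp (-(U * t))
        * (t ^ κ ω * Real.Gamma β * (β + γ) ^ (β + (κ ω : ℝ)))
        / (Real.Gamma (β + (κ ω : ℝ)) * β ^ β * γ ^ κ ω)
        * ∏ j ∈ Finset.range (κ ω), (U - h (ψ j ω))) = f := rfl
  -- a.e. the ψ's land in [0,t]
  have haej : ∀ j, ∀ᵐ ω ∂P, ψ j ω ∈ Set.Icc (0 : ℝ) t := by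
    intro j
    rw [ae_iff]
    have hpre : {ω | ¬ ψ j ω ∈ Set.Icc (0 : ℝ) t} = ψ j ⁻¹' (Set.Icc (0 : ℝ) t)ᶜ := rfl
    rw [hpre, ← Measure.map_apply (hψmeas j) hIcc.compl, hψlaw j]
    simp [Measure.restrict_apply hIcc.compl]
  have hae : ∀ᵐ ω ∂P, ∀ j, ψ j ω ∈ Set.Icc (0 : ℝ) t := ae_all_iff.2 haej
  have hf_nonneg : 0 ≤ᵐ[P] f := by
    filter_upwards [hae] with ω hω
    exact mul_nonneg (hCpos _).le (Finset.prod_nonneg fun j _ =>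
      sub_nonneg.2 (hU _ (hω j)))
  -- measurability of the integrand
  have hψvec : Measurable (fun ω => fun j => ψ j ω) :=
    measurable_pi_lambda _ hψmeas
  have hg2 : ∀ k : ℕ, Measurable (fun v : ℕ → ℝ => ∏ j ∈ Finset.range k, (U - h (v j))) :=
    fun k => Finset.measurable_prod _ fun j _ =>
      measurable_const.sub (hmeas.comp (measurable_pi_apply j))
  have hfmeas : Measurable f := by
    have hg : Measurable (fun q : (ℕ → ℝ) × ℕ =>
        C q.2 * ∏ j ∈ Finset.range q.2, (U - h (q.1 j))) :=
      measurable_from_prod_countable_left fun k => by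
        show Measurable fun v : ℕ → ℝ => C k * ∏ j ∈ Finset.range k, (U - h (v j))
        exact measurable_const.mul (hg2 k)
    exact hg.comp (hψvec.prodMk hκmeas)
  -- integrability of h and U - h on [0, t]
  haveI hfin : IsFiniteMeasure (volume.restrict (Set.Icc (0 : ℝ) t)) :=
    ⟨by rw [Measure.restrict_apply_univ]; exact measure_Icc_lt_top⟩
  have hint_h : Integrable h (volume.restrict (Set.Icc (0 : ℝ) t)) := by
    refine Integrable.mono' (integrable_const Ch) hmeas.aestronglyMeasurable ?_
    exact (ae_restrict_iff' hIcc).2 (ae_of_all _ fun x hx => by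
      simpa [Real.norm_eq_abs] using hbd x hx)
  have hint_Uh : Integrable (fun x => U - h x) (volume.restrict (Set.Icc (0 : ℝ) t)) :=
    (integrable_const U).sub hint_h
  set J : ℝ := ∫ x in Set.Icc (0 : ℝ) t, (U - h x) with hJ_def
  have hJ0 : 0 ≤ J :=
    setIntegral_nonneg hIcc fun x hx => sub_nonneg.2 (hU x hx)
  set I : ℝ := ∫ s in (0 : ℝ)..t, h s with hI_def
  have hJeq : J = U * t - I := by
    rw [hI_def, intervalIntegral.integral_of_le ht.le, ← integral_Icc_eq_integral_Ioc]
    rw [hJ_def, integral_sub (integrable_const U) hint_h, setIntegral_const,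
      Real.volume_real_Icc_of_le ht.le, sub_zero, smul_eq_mul]
    ring
  -- the ENNReal-valued factors
  set τ : ℕ → Ω → ENNReal := fun j ω => ENNReal.ofReal (U - h (ψ j ω)) with hτ_def
  have hτmeas : ∀ j, Measurable (τ j) := fun j =>
    ((measurable_const.sub hmeas).comp (hψmeas j)).ennreal_ofReal
  have hτindep : iIndepFun τ P :=
    hψindep.comp (fun _ x => ENNReal.ofReal (U - h x))
      (fun _ => (measurable_const.sub hmeas).ennreal_ofReal)
  set V : ENNReal := ENNReal.ofReal (J / t) with hV_def
  have hτint : ∀ j, ∫⁻ ω, τ j ω ∂P = V := by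
    intro j
    have h1 : ∫⁻ ω, τ j ω ∂P
        = ∫⁻ x, ENNReal.ofReal (U - h x) ∂(Measure.map (ψ j) P) :=
      (lintegral_map (measurable_const.sub hmeas).ennreal_ofReal (hψmeas j)).symm
    rw [h1, hψlaw j, lintegral_smul_measure]
    have h2 : ∫⁻ x in Set.Icc (0:ℝ) t, ENNReal.ofReal (U - h x) = ENNReal.ofReal J := by
      rw [hJ_def, ofReal_integral_eq_lintegral_ofReal hint_Uh
        ((ae_restrict_iff' hIcc).2 (ae_of_all _ fun x hx => sub_nonneg.2 (hU x hx)))]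
    rw [h2, hV_def, ENNReal.ofReal_div_of_pos ht, div_eq_mul_inv, mul_comm, smul_eq_mul]
  have hprodτmeas : ∀ k : ℕ, Measurable (fun ω => ∏ j ∈ Finset.range k, τ j ω) :=
    fun k => Finset.measurable_prod _ fun j _ => hτmeas j
  have hprodτ : ∀ k : ℕ, ∫⁻ ω, ∏ j ∈ Finset.range k, τ j ω ∂P = V ^ k := by
    intro k
    induction k with
    | zero => simp
    | succ k ih =>
      have hindep' : IndepFun (fun ω => ∏ j ∈ Finset.range k, τ j ω) (τ k) P := by
        have := hτindep.indepFun_prod_range_succ hτmeas k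
        have heq : (∏ j ∈ Finset.range k, τ j) = fun ω => ∏ j ∈ Finset.range k, τ j ω :=
          funext fun ω => Finset.prod_apply ω (Finset.range k) τ
        rwa [heq] at this
      calc ∫⁻ ω, ∏ j ∈ Finset.range (k+1), τ j ω ∂P
          = ∫⁻ ω, (∏ j ∈ Finset.range k, τ j ω) * τ k ω ∂P := by
            simp_rw [Finset.prod_range_succ]
        _ = (∫⁻ ω, ∏ j ∈ Finset.range k, τ j ω ∂P) * ∫⁻ ω, τ k ω ∂P :=
            lintegral_mul_eq_lintegral_mul_lintegral_of_indepFun''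
              (hprodτmeas k).aemeasurable (hτmeas k).aemeasurable hindep'
        _ = V ^ k * V := by rw [ih, hτint k]
        _ = V ^ (k+1) := (pow_succ V k).symm
  -- partition by the value of κ
  set A : ℕ → Set Ω := fun k => κ ⁻¹' {k} with hA_def
  have hAmeas : ∀ k, MeasurableSet (A k) := fun k => hκmeas (measurableSet_singleton k)
  have hAdisj : Pairwise (Function.onFun Disjoint A) := fun i j hij =>
    Set.disjoint_left.2 fun ω hi hj => hij (by
      simp only [hA_def, Set.mem_preimage, Set.mem_singleton_iff] at hi hj
      rw [← hi, hj])
  have hAuniv : (Set.univ : Set Ω) = ⋃ k, A k := by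
    ext ω; simp [hA_def]
  set F : Ω → ENNReal := fun ω => ENNReal.ofReal (f ω) with hF_def
  -- key: the set-lintegral over each piece of the partition
  have hterm : ∀ k : ℕ, ∫⁻ ω in A k, F ω ∂P
      = ENNReal.ofReal (C k) * (P (A k) * V ^ k) := by
    intro k
    have hindmeas : Measurable (fun ω =>
        Set.indicator ({k} : Set ℕ) (fun _ => (1:ENNReal)) (κ ω)) :=
      (measurable_const.indicator (measurableSet_singleton k)).comp hκmeas
    have hGmeas : Measurable (fun ω => ∏ j ∈ Finset.range k, τ j ω) := hprodτmeas k
    have hcong : ∀ᵐ ω ∂P, (A k).indicator F ω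
        = ENNReal.ofReal (C k)
          * (Set.indicator ({k} : Set ℕ) (fun _ => (1:ENNReal)) (κ ω)
            * ∏ j ∈ Finset.range k, τ j ω) := by
      filter_upwards [hae] with ω hω
      by_cases hωk : ω ∈ A k
      · have hκω : κ ω = k := by
          simpa [hA_def, Set.mem_preimage, Set.mem_singleton_iff] using hωk
        rw [Set.indicator_of_mem hωk]
        have hind1 : Set.indicator ({k} : Set ℕ) (fun _ => (1:ENNReal)) (κ ω) = 1 := by
          simp [hκω]
        rw [hind1, one_mul, hF_def]
        simp only [hf_def, hκω]
        rw [ENNReal.ofReal_mul (hCpos k).le,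
          ENNReal.ofReal_prod_of_nonneg (fun j _ => sub_nonneg.2 (hU _ (hω j)))]
      · have hκω : κ ω ≠ k := by
          simpa [hA_def, Set.mem_preimage, Set.mem_singleton_iff] using hωk
        rw [Set.indicator_of_notMem hωk]
        have hind0 : Set.indicator ({k} : Set ℕ) (fun _ => (1:ENNReal)) (κ ω) = 0 := by
          simp [hκω]
        rw [hind0, zero_mul, mul_zero]
    have hindep2 : IndepFun
        (fun ω => Set.indicator ({k} : Set ℕ) (fun _ => (1:ENNReal)) (κ ω))
        (fun ω => ∏ j ∈ Finset.range k, τ j ω) P := by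
      have m1 : Measurable (Set.indicator ({k} : Set ℕ) (fun _ => (1:ENNReal))) :=
        measurable_const.indicator (measurableSet_singleton k)
      have m2 : Measurable (fun v : ℕ → ℝ =>
          ∏ j ∈ Finset.range k, ENNReal.ofReal (U - h (v j))) :=
        Finset.measurable_prod _ fun j _ =>
          (measurable_const.sub (hmeas.comp (measurable_pi_apply j))).ennreal_ofReal
      exact hκψindep.comp m1 m2
    have hlint_ind : ∫⁻ ω, Set.indicator ({k} : Set ℕ) (fun _ => (1:ENNReal)) (κ ω) ∂P
        = P (A k) := by
      have heq : (fun ω => Set.indicator ({k} : Set ℕ) (fun _ => (1:ENNReal)) (κ ω))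
          = (A k).indicator (1 : Ω → ENNReal) := by
        ext ω
        by_cases hωk : κ ω = k
        · simp [Set.indicator_apply, hA_def, hωk]
        · simp [Set.indicator_apply, hA_def, hωk]
      rw [heq]
      exact lintegral_indicator_one (hAmeas k)
    rw [← lintegral_indicator (hAmeas k), lintegral_congr_ae hcong,
      lintegral_const_mul _ (show Measurable (fun ω => Set.indicator ({k} : Set ℕ) (fun _ => (1:ENNReal)) (κ ω) * ∏ j ∈ Finset.range k, τ j ω) from hindmeas.mul hGmeas),
      lintegral_mul_eq_lintegral_mul_lintegral_of_indepFun''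
        hindmeas.aemeasurable hGmeas.aemeasurable hindep2,
      hlint_ind, hprodτ k]
  -- compute the total lintegral
  have hlint : ∫⁻ ω, F ω ∂P = ENNReal.ofReal (Real.exp (-(U * t)) * Real.exp J) := by
    have h1 : ∫⁻ ω, F ω ∂P = ∑' k, ∫⁻ ω in A k, F ω ∂P := by
      rw [← setLIntegral_univ, hAuniv, lintegral_iUnion hAmeas hAdisj]
    rw [h1]
    have h2 : ∀ k : ℕ, ∫⁻ ω in A k, F ω ∂P
        = ENNReal.ofReal (Real.exp (-(U * t)) * (J ^ k / Nat.factorial k)) := by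
      intro k
      rw [hterm k]
      have hPA : P (A k) = ENNReal.ofReal (p k) := by
        have : A k = {ω | κ ω = k} := rfl
        rw [this, hκlaw k]
      rw [hPA, hV_def, ← ENNReal.ofReal_pow (by positivity),
        ← ENNReal.ofReal_mul (hppos k), ← ENNReal.ofReal_mul (hCpos k).le]
      congr 1
      have hkey : C k * p k = Real.exp (-(U * t)) * (t ^ k / Nat.factorial k) :=
        gpe2_scalar β γ t U hβ hγ k
      have htk : (t : ℝ) ^ k ≠ 0 := (pow_pos ht k).ne'
      calc C k * (p k * (J / t) ^ k) = (C k * p k) * (J / t) ^ k := by ring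
        _ = Real.exp (-(U * t)) * (t ^ k / Nat.factorial k) * (J ^ k / t ^ k) := by
            rw [hkey, div_pow]
        _ = Real.exp (-(U * t)) * (J ^ k / Nat.factorial k) := by
            field_simp
    simp_rw [h2]
    rw [← ENNReal.ofReal_tsum_of_nonneg
      (fun k => by positivity)
      ((Real.summable_pow_div_factorial J).mul_left _)]
    congr 1
    rw [tsum_mul_left]
    congr 1
    rw [Real.exp_eq_exp_ℝ, NormedSpace.exp_eq_tsum_div]
  -- conclude
  show ∫ ω, f ω ∂P = Real.exp (-I)
  rw [integral_eq_lintegral_of_nonneg_ae hf_nonneg hfmeas.aestronglyMeasurable]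
  rw [hlint, ENNReal.toReal_ofReal (by positivity)]
  rw [← Real.exp_add]
  congr 1
  rw [hJeq]; ring
end

section
/- Theorem 2 (finite variance of GPE-1, core estimate): let d ≥ 1, t > 0, x, z ∈ ℝ^d, and let B be a standard d-dimensional Brownian motion. Define the Brownian bridge from x at time 0 to z at time t by W_s = x + (s/t)(z − x) + B_s − (s/t) B_t for s ∈ [0,t]. Suppose g : ℝ^d → ℝ is continuous and there exists δ ≥ 0 such that g(u_1,…,u_d) ≥ −δ ∑_{i=1}^{d} (1 + |u_i|) for all u ∈ ℝ^d. Then E[ exp( −2t · inf_{s∈[0,t]} g(W_s) ) ] < ∞; in particular the lower bound L_W = inf_{s∈[0,t]} g(W_s) satisfies E[e^{−2 L_W t}] < ∞, so the GPE-1 estimator (whose conditional second moment given the path is at most e^{−2 L_W t}) has finite variance. -/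
open MeasureTheory ProbabilityTheory Real Filter
open scoped ENNReal NNReal

lemma chain_dyadic {d : ℕ} (t : ℝ) (f : ℝ → Fin d → ℝ) (h0 : f 0 = 0)
    (a : ℕ → ℝ) (ha : ∀ n, 0 ≤ a n)
    (hinc : ∀ n : ℕ, ∀ k : ℕ, k < 2^n →
      ‖f (((k:ℝ)+1) * t / 2^n) - f ((k:ℝ) * t / 2^n)‖ ≤ a n) :
    ∀ N : ℕ, ∀ k : ℕ, k ≤ 2^N → ‖f ((k:ℝ) * t / 2^N)‖ ≤ ∑ j ∈ Finset.range (N+1), a j := by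
  intro N
  induction N with
  | zero =>
    intro k hk
    interval_cases k
    · simpa [h0] using ha 0
    · have h := hinc 0 0 (by norm_num)
      simpa [h0] using h
  | succ N ih =>
    intro k hk
    have hsub : ∑ j ∈ Finset.range (N+1), a j ≤ ∑ j ∈ Finset.range (N+1+1), a j :=
      Finset.sum_le_sum_of_subset_of_nonneg
        (Finset.range_subset_range.2 (by omega)) (fun i _ _ => ha i)
    rcases Nat.even_or_odd k with ⟨k', rfl⟩ | ⟨k', rfl⟩
    · have hk' : k' ≤ 2^N := by
        have h2 : (2:ℕ)^(N+1) = 2 * 2^N := by ring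
        omega
      have heq : ((k' + k' : ℕ) : ℝ) * t / 2^(N+1) = (k' : ℝ) * t / 2^N := by
        push_cast; ring
      rw [heq]
      exact (ih k' hk').trans hsub
    · have h2 : (2:ℕ)^(N+1) = 2 * 2^N := by ring
      have hlt : 2*k' + 1 < 2^(N+1) := by omega
      have hk'N : k' ≤ 2^N := by omega
      have hprev := ih k' hk'N
      have hstep := hinc (N+1) (2*k') (by omega)
      have hv : ((2*k'+1 : ℕ) : ℝ) * t / 2^(N+1) = (((2*k' : ℕ):ℝ)+1) * t / 2^(N+1) := by
        push_cast; ring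
      have hu : ((2*k' : ℕ) : ℝ) * t / 2^(N+1) = (k' : ℝ) * t / 2^N := by
        push_cast; ring
      rw [hv]
      rw [← hu] at hprev
      calc ‖f ((((2*k' : ℕ):ℝ)+1) * t / 2^(N+1))‖
          ≤ ‖f (((2*k' : ℕ):ℝ) * t / 2^(N+1))‖
            + ‖f ((((2*k' : ℕ):ℝ)+1) * t / 2^(N+1)) - f (((2*k' : ℕ):ℝ) * t / 2^(N+1))‖ :=
            norm_le_insert' _ _
        _ ≤ ∑ j ∈ Finset.range (N+1), a j + a (N+1) := add_le_add hprev hstep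
        _ = ∑ j ∈ Finset.range (N+1+1), a j := (Finset.sum_range_succ a (N+1)).symm


lemma chain_sup {d : ℕ} {t : ℝ} (ht : 0 < t) {f : ℝ → Fin d → ℝ}
    (hf : Continuous f) (h0 : f 0 = 0)
    {a : ℕ → ℝ} (ha : ∀ n, 0 ≤ a n) {c : ℝ}
    (hc : ∀ N : ℕ, ∑ j ∈ Finset.range (N+1), a j ≤ c)
    (hinc : ∀ n : ℕ, ∀ k : ℕ, k < 2^n →
      ‖f (((k:ℝ)+1) * t / 2^n) - f ((k:ℝ) * t / 2^n)‖ ≤ a n) :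
    ∀ s ∈ Set.Icc (0:ℝ) t, ‖f s‖ ≤ c := by
  intro s hs
  obtain ⟨hs0, hst⟩ := hs
  set u : ℕ → ℝ := fun N => (⌊s * 2^N / t⌋₊ : ℝ) * t / 2^N with hu
  have hx0 : ∀ N : ℕ, (0:ℝ) ≤ s * 2^N / t := fun N => by positivity
  have hklow : ∀ N : ℕ, (⌊s * 2^N / t⌋₊ : ℝ) ≤ s * 2^N / t := fun N => Nat.floor_le (hx0 N)
  have hkup : ∀ N : ℕ, s * 2^N / t < (⌊s * 2^N / t⌋₊ : ℝ) + 1 := fun N => Nat.lt_floor_add_one _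
  have hule : ∀ N : ℕ, u N ≤ s := by
    intro N
    have h2 : (0:ℝ) < 2^N := by positivity
    have h3 : (⌊s * 2^N / t⌋₊ : ℝ) * t ≤ s * 2^N := (le_div_iff₀ ht).1 (hklow N)
    show (⌊s * 2^N / t⌋₊ : ℝ) * t / 2^N ≤ s
    rw [div_le_iff₀ h2]
    linarith
  have huge : ∀ N : ℕ, s - t * (1/2)^N ≤ u N := by
    intro N
    have h2 : (0:ℝ) < 2^N := by positivity
    have h3 : s * 2^N < ((⌊s * 2^N / t⌋₊:ℝ)+1) * t := (div_lt_iff₀ ht).1 (hkup N)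
    have hmul : (1/2:ℝ)^N * 2^N = 1 := by
      rw [← mul_pow]; norm_num
    show s - t * (1/2)^N ≤ (⌊s * 2^N / t⌋₊:ℝ) * t / 2^N
    rw [le_div_iff₀ h2]
    nlinarith
  have htend : Tendsto u atTop (nhds s) := by
    have hgeo : Tendsto (fun N : ℕ => t * (1/2:ℝ)^N) atTop (nhds 0) := by
      simpa using (tendsto_pow_atTop_nhds_zero_of_lt_one (by norm_num : (0:ℝ) ≤ 1/2)
        (by norm_num : (1/2:ℝ) < 1)).const_mul t
    have h1 : Tendsto (fun N : ℕ => s - t * (1/2:ℝ)^N) atTop (nhds s) := by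
      simpa using tendsto_const_nhds.sub hgeo
    exact tendsto_of_tendsto_of_tendsto_of_le_of_le h1 tendsto_const_nhds huge hule
  have hbound : ∀ N : ℕ, ‖f (u N)‖ ≤ c := by
    intro N
    have hk : ⌊s * 2^N / t⌋₊ ≤ 2^N := by
      have : s * 2^N / t ≤ ((2^N : ℕ) : ℝ) := by
        push_cast
        rw [div_le_iff₀ ht]
        nlinarith [pow_pos (show (0:ℝ) < 2 by norm_num) N]
      calc ⌊s * 2^N / t⌋₊ ≤ ⌊((2^N : ℕ) : ℝ)⌋₊ := Nat.floor_le_floor this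
        _ = 2^N := Nat.floor_natCast _
    exact (chain_dyadic t f h0 a ha hinc N _ hk).trans (hc N)
  have : Tendsto (fun N => ‖f (u N)‖) atTop (nhds ‖f s‖) :=
    ((hf.norm).tendsto s).comp htend
  exact le_of_tendsto this (Eventually.of_forall hbound)


lemma gauss_tail {v a : ℝ} (hv : 0 < v) (ha : 0 < a) :
    gaussianReal 0 v.toNNReal {y : ℝ | a < |y|}
      ≤ ENNReal.ofReal (2 * Real.exp (-(a^2)/(4*v))) := by
  have hvnn : v.toNNReal ≠ 0 := by
    simp [Real.toNNReal_eq_zero]; linarith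
  have hvv : ((v.toNNReal : ℝ)) = v := Real.coe_toNNReal _ hv.le
  rw [gaussianReal_apply _ hvnn]
  set c1 := Real.exp (-(a^2)/(4*v)) with hc1
  set G : ℝ → ℝ := fun y => c1 * ((Real.sqrt (2 * π * v))⁻¹ * Real.exp (-(y^2)/(4*v))) with hG
  have hGnn : ∀ y, 0 ≤ G y := fun y => by rw [hG, hc1]; positivity
  have hpdf : ∀ y : ℝ, y ∈ {y : ℝ | a < |y|} →
      gaussianPDF 0 v.toNNReal y ≤ ENNReal.ofReal (G y) := by
    intro y hy
    rw [gaussianPDF]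
    apply ENNReal.ofReal_le_ofReal
    rw [gaussianPDFReal, hvv]
    have hy2 : a^2 < y^2 := by
      have h := pow_lt_pow_left₀ (show a < |y| from hy) ha.le (two_ne_zero)
      rwa [sq_abs] at h
    have hexp : Real.exp (-(y - 0)^2/(2*v)) ≤ c1 * Real.exp (-(y^2)/(4*v)) := by
      rw [hc1, ← Real.exp_add]
      apply Real.exp_le_exp.2
      rw [sub_zero]
      rw [← add_div]
      rw [div_le_div_iff₀ (by linarith) (by linarith)]
      nlinarith
    calc (Real.sqrt (2*π*v))⁻¹ * Real.exp (-(y-0)^2/(2*v))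
        ≤ (Real.sqrt (2*π*v))⁻¹ * (c1 * Real.exp (-(y^2)/(4*v))) :=
          mul_le_mul_of_nonneg_left hexp (by positivity)
      _ = G y := by rw [hG]; ring
  have hGmeas : Measurable G := by
    apply Measurable.const_mul
    apply Measurable.const_mul
    exact (((measurable_id.pow_const 2).neg.div_const _).exp)
  have hGint : Integrable G := by
    have h1 : Integrable (fun y : ℝ => Real.exp (-(1/(4*v)) * y^2)) :=
      integrable_exp_neg_mul_sq (by positivity)
    have : G = fun y => (c1 * (Real.sqrt (2*π*v))⁻¹) * Real.exp (-(1/(4*v)) * y^2) := by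
      funext y; rw [hG]; ring_nf
    rw [this]
    exact h1.const_mul _
  calc ∫⁻ y in {y : ℝ | a < |y|}, gaussianPDF 0 v.toNNReal y
      ≤ ∫⁻ y in {y : ℝ | a < |y|}, ENNReal.ofReal (G y) := by
        apply setLIntegral_mono (hGmeas.ennreal_ofReal) hpdf
    _ ≤ ∫⁻ y, ENNReal.ofReal (G y) := setLIntegral_le_lintegral _ _
    _ = ENNReal.ofReal (∫ y, G y) :=
        (ofReal_integral_eq_lintegral_ofReal hGint (Eventually.of_forall hGnn)).symm
    _ ≤ ENNReal.ofReal (2 * c1) := by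
        apply ENNReal.ofReal_le_ofReal
        have hInt : ∫ y, G y = c1 * ((Real.sqrt (2*π*v))⁻¹ * Real.sqrt (π / (1/(4*v)))) := by
          have : G = fun y => (c1 * (Real.sqrt (2*π*v))⁻¹) * Real.exp (-(1/(4*v)) * y^2) := by
            funext y; rw [hG]; ring_nf
          rw [this, integral_const_mul, integral_gaussian]
          ring
        rw [hInt]
        have hπ : Real.sqrt (π / (1/(4*v))) = Real.sqrt 2 * Real.sqrt (2*π*v) := by
          rw [← Real.sqrt_mul (by norm_num)]
          congr 1
          field_simp
          ring
        rw [hπ]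
        have hne : Real.sqrt (2*π*v) ≠ 0 := by
          apply Real.sqrt_ne_zero'.2
          positivity
        have h2 : (Real.sqrt (2*π*v))⁻¹ * (Real.sqrt 2 * Real.sqrt (2*π*v)) = Real.sqrt 2 := by
          field_simp
        rw [h2]
        have hs2 : Real.sqrt 2 ≤ 2 := by
          nlinarith [Real.sq_sqrt (show (0:ℝ) ≤ 2 by norm_num), Real.sqrt_nonneg 2]
        nlinarith [Real.exp_pos (-(a^2)/(4*v)), hs2, Real.sqrt_nonneg 2]


lemma pi_marginal {d : ℕ} (μ : Fin d → Measure ℝ) [∀ i, IsProbabilityMeasure (μ i)]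
    (i : Fin d) {S : Set ℝ} (hS : MeasurableSet S) :
    Measure.pi μ {y : Fin d → ℝ | y i ∈ S} = μ i S := by
  have h1 : {y : Fin d → ℝ | y i ∈ S} = Function.eval i ⁻¹' S := rfl
  rw [h1, Set.eval_preimage, Measure.pi_pi]
  rw [Fintype.prod_eq_single i]
  · simp
  · intro j hj
    simp [Function.update_of_ne hj]

lemma inc_tail {Ω : Type*} [MeasurableSpace Ω] (P : Measure Ω) [IsProbabilityMeasure P]
    {d : ℕ} (B : ℝ → Ω → Fin d → ℝ) (hBmeas : ∀ s, Measurable (B s))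
    (hBgauss : ∀ u v : ℝ, u ≤ v →
      Measure.map (fun ω => B v ω - B u ω) P
        = Measure.pi fun _ : Fin d => gaussianReal 0 (v - u).toNNReal)
    {u v : ℝ} (huv : u < v) (i : Fin d) {a : ℝ} (ha : 0 < a) :
    P {ω | a < |B v ω i - B u ω i|} ≤ ENNReal.ofReal (2 * Real.exp (-(a^2)/(4*(v-u)))) := by
  have hX : Measurable (fun ω => B v ω - B u ω) := (hBmeas v).sub (hBmeas u)
  have hSm : MeasurableSet {y : ℝ | a < |y|} :=
    measurableSet_lt measurable_const measurable_id.abs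
  have hset : {ω | a < |B v ω i - B u ω i|}
      = (fun ω => B v ω - B u ω) ⁻¹' {y : Fin d → ℝ | y i ∈ {r : ℝ | a < |r|}} := by
    ext ω; simp [Set.mem_preimage]
  rw [hset, ← Measure.map_apply hX]
  · rw [hBgauss u v huv.le, pi_marginal _ i hSm]
    exact gauss_tail (by linarith) ha
  · exact measurable_pi_apply i (measurableSet_lt measurable_const measurable_id.abs)

set_option maxHeartbeats 1000000 in
/-- Theorem 2 (finite variance of GPE-1, core estimate): let `d ≥ 1`, `t > 0`,
`x, z ∈ ℝ^d`, and let `B` be a standard `d`-dimensional Brownian motion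
(continuous paths, `B 0 = 0`, independent increments with centered Gaussian law
of covariance `(v-u)·Id`). Define the Brownian bridge from `x` at time `0` to
`z` at time `t` by `W s = x + (s/t)(z - x) + B s - (s/t) B t`. If
`g : ℝ^d → ℝ` is continuous and `g(u) ≥ -δ ∑ᵢ (1 + |uᵢ|)` for some `δ ≥ 0`,
then `E[exp(-2t · inf_{s ∈ [0,t]} g(W s))] < ∞`. -/
theorem gpe1_finite_variance_core
    {Ω : Type*} [MeasurableSpace Ω] (P : Measure Ω) [IsProbabilityMeasure P]
    (d : ℕ) (hd : 1 ≤ d) (t : ℝ) (ht : 0 < t) (x z : Fin d → ℝ)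
    (B : ℝ → Ω → Fin d → ℝ)
    (hBmeas : ∀ s, Measurable (B s))
    (hBcont : ∀ ω, Continuous fun s => B s ω)
    (hB0 : ∀ ω, B 0 ω = 0)
    (hBindep : ∀ (n : ℕ) (τ : ℕ → ℝ), Monotone τ →
      iIndepFun
        (fun k : Fin n => fun ω => B (τ (k + 1)) ω - B (τ k) ω) P)
    (hBgauss : ∀ u v : ℝ, u ≤ v →
      Measure.map (fun ω => B v ω - B u ω) P
        = Measure.pi fun _ : Fin d => gaussianReal 0 (v - u).toNNReal)
    (g : (Fin d → ℝ) → ℝ) (hg : Continuous g)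
    (δ : ℝ) (hδ : 0 ≤ δ)
    (hgrowth : ∀ u : Fin d → ℝ, -(δ * ∑ i, (1 + |u i|)) ≤ g u)
    (W : ℝ → Ω → Fin d → ℝ)
    (hW : ∀ s ω, W s ω = x + (s / t) • (z - x) + B s ω - (s / t) • B t ω) :
    ∫⁻ ω, ENNReal.ofReal
        (Real.exp (-2 * t * ⨅ s : Set.Icc (0 : ℝ) t, g (W s ω))) ∂P < ⊤ := by
  classical
  haveI : Nonempty (Set.Icc (0:ℝ) t) := ⟨⟨0, le_refl 0, ht.le⟩⟩
  set cx : ℝ := ‖x‖ + ‖z - x‖ with hcx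
  have hcx0 : 0 ≤ cx := by positivity
  set A : ℝ := 2*t*δ*(d:ℝ)*(1+cx) with hA
  set C : ℝ := 4*t*δ*(d:ℝ) with hC
  have hC0 : 0 ≤ C := by positivity
  set q : ℝ := 1/(196*t) with hq
  have hq0 : 0 < q := by positivity
  set Good : ℕ → Set Ω := fun m => {ω | ∀ n k : ℕ, k < 2^n →
    ‖B (((k:ℝ)+1)*t/2^n) ω - B ((k:ℝ)*t/2^n) ω‖ ≤ (m:ℝ)/7*(6/7)^n} with hGood
  have hGoodMeas : ∀ m, MeasurableSet (Good m) := by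
    intro m
    have : Good m = ⋂ (n : ℕ), ⋂ (k : ℕ), ⋂ (_ : k < 2^n),
        {ω | ‖B (((k:ℝ)+1)*t/2^n) ω - B ((k:ℝ)*t/2^n) ω‖ ≤ (m:ℝ)/7*(6/7)^n} := by
      ext ω; simp [hGood, Set.mem_iInter]
    rw [this]
    refine MeasurableSet.iInter fun n => MeasurableSet.iInter fun k =>
      MeasurableSet.iInter fun _ => ?_
    exact measurableSet_le (((hBmeas _).sub (hBmeas _)).norm) measurable_const
  have hsup : ∀ (m : ℕ), ∀ ω ∈ Good m, ∀ s ∈ Set.Icc (0:ℝ) t, ‖B s ω‖ ≤ (m:ℝ) := by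
    intro m ω hω
    refine chain_sup ht (hBcont ω) (hB0 ω)
      (a := fun n => (m:ℝ)/7*(6/7)^n) (fun n => by positivity) ?_ hω
    intro N
    have hgeom : ∑ j ∈ Finset.range (N+1), ((6:ℝ)/7)^j
        = (((6:ℝ)/7)^(N+1) - 1)/((6/7) - 1) := geom_sum_eq (by norm_num) (N+1)
    have hpow : (0:ℝ) ≤ (6/7:ℝ)^(N+1) := by positivity
    calc ∑ j ∈ Finset.range (N+1), (m:ℝ)/7*(6/7)^j
        = (m:ℝ)/7 * ∑ j ∈ Finset.range (N+1), ((6:ℝ)/7)^j := by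
          rw [Finset.mul_sum]
      _ ≤ (m:ℝ) := by
          rw [hgeom, show (((6:ℝ)/7)^(N+1) - 1)/((6/7:ℝ) - 1) = 7*(1 - (6/7:ℝ)^(N+1)) by
            field_simp; ring]
          have hm : (0:ℝ) ≤ (m:ℕ) := Nat.cast_nonneg m
          nlinarith [mul_nonneg hm hpow]
  have hfb : ∀ (m : ℕ), ∀ ω ∈ Good m,
      ENNReal.ofReal (Real.exp (-2 * t * ⨅ s : Set.Icc (0 : ℝ) t, g (W s ω)))
        ≤ ENNReal.ofReal (Real.exp (A + C*(m:ℝ))) := by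
    intro m ω hω
    apply ENNReal.ofReal_le_ofReal
    apply Real.exp_le_exp.2
    have hInf : -(δ * ((d:ℝ)*(1+cx+2*(m:ℝ)))) ≤ ⨅ s : Set.Icc (0:ℝ) t, g (W s ω) := by
      apply le_ciInf
      intro s
      refine le_trans ?_ (hgrowth (W s.1 ω))
      apply neg_le_neg
      apply mul_le_mul_of_nonneg_left ?_ hδ
      have hterm : ∀ i : Fin d, 1 + |W s.1 ω i| ≤ 1 + cx + 2*(m:ℝ) := by
        intro i
        have hWi : W s.1 ω i = x i + (s.1/t)*(z i - x i) + B s.1 ω i - (s.1/t)*(B t ω i) := by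
          rw [hW s.1 ω]; simp [smul_eq_mul]
        have hst0 : 0 ≤ s.1/t := div_nonneg s.2.1 ht.le
        have hst1 : s.1/t ≤ 1 := (div_le_one ht).2 s.2.2
        have hx1 : |x i| ≤ ‖x‖ := by
          rw [← Real.norm_eq_abs]; exact norm_le_pi_norm x i
        have hz1 : |z i - x i| ≤ ‖z - x‖ := by
          rw [← Real.norm_eq_abs]
          simpa using norm_le_pi_norm (z - x) i
        have hB1 : |B s.1 ω i| ≤ (m:ℝ) := by
          rw [← Real.norm_eq_abs]
          exact (norm_le_pi_norm (B s.1 ω) i).trans (hsup m ω hω s.1 s.2)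
        have hB2 : |B t ω i| ≤ (m:ℝ) := by
          rw [← Real.norm_eq_abs]
          exact (norm_le_pi_norm (B t ω) i).trans
            (hsup m ω hω t ⟨ht.le, le_refl t⟩)
        have habs : |W s.1 ω i| ≤ |x i| + (s.1/t)*|z i - x i| + |B s.1 ω i|
            + (s.1/t)*|B t ω i| := by
          rw [hWi]
          calc |x i + (s.1/t)*(z i - x i) + B s.1 ω i - (s.1/t)*(B t ω i)|
              ≤ |x i + (s.1/t)*(z i - x i) + B s.1 ω i| + |(s.1/t)*(B t ω i)| :=
                abs_sub _ _
            _ ≤ |x i + (s.1/t)*(z i - x i)| + |B s.1 ω i| + |(s.1/t)*(B t ω i)| := by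
                linarith [abs_add_le (x i + (s.1/t)*(z i - x i)) (B s.1 ω i)]
            _ ≤ |x i| + |(s.1/t)*(z i - x i)| + |B s.1 ω i| + |(s.1/t)*(B t ω i)| := by
                linarith [abs_add_le (x i) ((s.1/t)*(z i - x i))]
            _ = |x i| + (s.1/t)*|z i - x i| + |B s.1 ω i| + (s.1/t)*|B t ω i| := by
                rw [abs_mul, abs_mul, abs_of_nonneg hst0]
        have h1 : (s.1/t)*|z i - x i| ≤ |z i - x i| :=
          mul_le_of_le_one_left (abs_nonneg _) hst1
        have h2 : (s.1/t)*|B t ω i| ≤ |B t ω i| :=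
          mul_le_of_le_one_left (abs_nonneg _) hst1
        simp only [hcx]
        linarith
      calc ∑ i : Fin d, (1 + |W s.1 ω i|) ≤ ∑ _i : Fin d, (1 + cx + 2*(m:ℝ)) :=
            Finset.sum_le_sum (fun i _ => hterm i)
        _ = (d:ℝ)*(1+cx+2*(m:ℝ)) := by
            rw [Finset.sum_const, Finset.card_univ, Fintype.card_fin, nsmul_eq_mul]
    have := mul_le_mul_of_nonpos_left hInf (show -2*t ≤ 0 by linarith)
    calc -2 * t * ⨅ s : Set.Icc (0:ℝ) t, g (W s ω)
        ≤ -2*t*(-(δ * ((d:ℝ)*(1+cx+2*(m:ℝ))))) := this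
      _ = A + C*(m:ℝ) := by rw [hA, hC]; ring
  have hexpo : ∀ (m n : ℕ),
      -(((m:ℝ)/7*(6/7)^n)^2)/(4*(t/2^n)) = -(q*(72/49)^n*(m:ℝ)^2) := by
    intro m n
    have h72 : ((72:ℝ)/49)^n = ((6:ℝ)^n)^2*(2:ℝ)^n/((7:ℝ)^n)^2 := by
      have e6 : ((6:ℝ)^n)^2 = ((36:ℝ))^n := by
        rw [← pow_mul, mul_comm n 2, pow_mul]; norm_num
      have e7 : ((7:ℝ)^n)^2 = ((49:ℝ))^n := by
        rw [← pow_mul, mul_comm n 2, pow_mul]; norm_num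
      rw [e6, e7, div_pow, ← mul_pow]
      norm_num
    have h67 : ((6:ℝ)/7)^n = (6:ℝ)^n/(7:ℝ)^n := div_pow _ _ _
    rw [h72, h67, hq]
    have h7 : ((7:ℝ)^n) ≠ 0 := by positivity
    have h2 : ((2:ℝ)^n) ≠ 0 := by positivity
    field_simp
    ring
  have hcompl : ∀ m : ℕ, 1 ≤ m → P ((Good m)ᶜ) ≤
      ∑' n : ℕ, ((2:ℝ≥0∞)^n * d) *
        ENNReal.ofReal (2 * Real.exp (-(q*(72/49)^n*(m:ℝ)^2))) := by
    intro m hm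
    have hcover : (Good m)ᶜ ⊆ ⋃ n : ℕ, ⋃ k ∈ Finset.range (2^n), ⋃ i : Fin d,
        {ω | (m:ℝ)/7*(6/7)^n < |B (((k:ℝ)+1)*t/2^n) ω i - B ((k:ℝ)*t/2^n) ω i|} := by
      intro ω hω
      simp only [hGood, Set.mem_compl_iff, Set.mem_setOf_eq, not_forall] at hω
      obtain ⟨n, k, hk, hgt⟩ := hω
      push_neg at hgt
      have han : (0:ℝ) ≤ (m:ℝ)/7*(6/7)^n := by positivity
      have : ∃ i : Fin d, (m:ℝ)/7*(6/7)^n < |B (((k:ℝ)+1)*t/2^n) ω i - B ((k:ℝ)*t/2^n) ω i| := by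
        by_contra hcon
        push_neg at hcon
        apply absurd hgt
        push_neg
        apply (pi_norm_le_iff_of_nonneg han).2
        intro i
        rw [Real.norm_eq_abs]
        simpa using hcon i
      obtain ⟨i, hi⟩ := this
      refine Set.mem_iUnion.2 ⟨n, ?_⟩
      refine Set.mem_iUnion.2 ⟨k, ?_⟩
      refine Set.mem_iUnion.2 ⟨Finset.mem_range.2 hk, ?_⟩
      exact Set.mem_iUnion.2 ⟨i, hi⟩
    refine (measure_mono hcover).trans ?_
    refine (measure_iUnion_le _).trans ?_
    apply ENNReal.tsum_le_tsum
    intro n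
    refine (measure_biUnion_finset_le _ _).trans ?_
    have hone : ∀ k ∈ Finset.range (2^n),
        P (⋃ i : Fin d, {ω | (m:ℝ)/7*(6/7)^n <
          |B (((k:ℝ)+1)*t/2^n) ω i - B ((k:ℝ)*t/2^n) ω i|})
        ≤ (d : ℝ≥0∞) * ENNReal.ofReal (2 * Real.exp (-(q*(72/49)^n*(m:ℝ)^2))) := by
      intro k _
      refine (measure_iUnion_le _).trans ?_
      have hterm : ∀ i : Fin d,
          P {ω | (m:ℝ)/7*(6/7)^n < |B (((k:ℝ)+1)*t/2^n) ω i - B ((k:ℝ)*t/2^n) ω i|}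
          ≤ ENNReal.ofReal (2 * Real.exp (-(q*(72/49)^n*(m:ℝ)^2))) := by
        intro i
        have huv : (k:ℝ)*t/2^n < ((k:ℝ)+1)*t/2^n := by
          have h2 : (0:ℝ) < (2:ℝ)^n := by positivity
          have hkk : (k:ℝ)*t < ((k:ℝ)+1)*t := by
            nlinarith [Nat.cast_nonneg (α := ℝ) k]
          exact div_lt_div_of_pos_right hkk h2
        have hvu : ((k:ℝ)+1)*t/2^n - (k:ℝ)*t/2^n = t/2^n := by ring
        have ha : (0:ℝ) < (m:ℝ)/7*(6/7)^n := by
          have : (1:ℝ) ≤ (m:ℝ) := by exact_mod_cast hm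
          positivity
        have := inc_tail P B hBmeas hBgauss huv i ha
        rw [hvu] at this
        refine this.trans ?_
        rw [hexpo m n]
      calc ∑' i : Fin d, P {ω | (m:ℝ)/7*(6/7)^n <
            |B (((k:ℝ)+1)*t/2^n) ω i - B ((k:ℝ)*t/2^n) ω i|}
          ≤ ∑' _i : Fin d, ENNReal.ofReal (2 * Real.exp (-(q*(72/49)^n*(m:ℝ)^2))) :=
            ENNReal.tsum_le_tsum (fun i => hterm i)
        _ = (d : ℝ≥0∞) * ENNReal.ofReal (2 * Real.exp (-(q*(72/49)^n*(m:ℝ)^2))) := by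
            rw [tsum_fintype]
            simp [Finset.sum_const, Finset.card_univ, Fintype.card_fin, nsmul_eq_mul]
    calc ∑ k ∈ Finset.range (2^n), P (⋃ i : Fin d, {ω | (m:ℝ)/7*(6/7)^n <
            |B (((k:ℝ)+1)*t/2^n) ω i - B ((k:ℝ)*t/2^n) ω i|})
        ≤ ∑ _k ∈ Finset.range (2^n),
            (d : ℝ≥0∞) * ENNReal.ofReal (2 * Real.exp (-(q*(72/49)^n*(m:ℝ)^2))) :=
          Finset.sum_le_sum hone
      _ = ((2:ℝ≥0∞)^n * d) * ENNReal.ofReal (2 * Real.exp (-(q*(72/49)^n*(m:ℝ)^2))) := by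
          rw [Finset.sum_const, Finset.card_range, nsmul_eq_mul]
          push_cast
          ring
  set M : ℕ := 1 + ⌈2/((23/49)*q)⌉₊ + ⌈(C+2)/q⌉₊ with hM
  have hMge : ∀ m : ℕ, M ≤ m → (1:ℝ) ≤ (m:ℝ) ∧ 2/((23/49)*q) ≤ (m:ℝ) ∧ (C+2)/q ≤ (m:ℝ) := by
    intro m hm
    have h1 : ((M:ℕ):ℝ) ≤ (m:ℝ) := Nat.cast_le.2 hm
    have h2 : ((M:ℕ):ℝ) = 1 + (⌈2/((23/49)*q)⌉₊ : ℝ) + (⌈(C+2)/q⌉₊ : ℝ) := by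
      rw [hM]; push_cast; ring
    have h3 := Nat.le_ceil (2/((23/49)*q))
    have h4 := Nat.le_ceil ((C+2)/q)
    have h5 : (0:ℝ) ≤ (⌈2/((23/49)*q)⌉₊ : ℝ) := Nat.cast_nonneg _
    have h6 : (0:ℝ) ≤ (⌈(C+2)/q⌉₊ : ℝ) := Nat.cast_nonneg _
    refine ⟨by linarith, by linarith, by linarith⟩
  have hMtail : ∀ m : ℕ, M ≤ m →
      P ((Good m)ᶜ) ≤ ENNReal.ofReal (4*(d:ℝ)*Real.exp (-(q*(m:ℝ)^2))) := by
    intro m hm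
    obtain ⟨hm1, hm2, hm3⟩ := hMge m hm
    have hm1' : 1 ≤ m := by exact_mod_cast hm1
    refine (hcompl m hm1').trans ?_
    set θ : ℝ := Real.exp (-((23/49)*q*(m:ℝ)^2)) with hθ
    have hθ0 : 0 < θ := Real.exp_pos _
    have hq2 : 2 ≤ (23/49)*q*(m:ℝ)^2 := by
      have hεq : (0:ℝ) < (23/49)*q := by positivity
      rw [div_le_iff₀ hεq] at hm2
      nlinarith
    have hθle : 2*θ ≤ 1/2 := by
      have hθe2 : θ ≤ Real.exp (-2) := by
        rw [hθ]; apply Real.exp_le_exp.2; linarith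
      have he1 : (2:ℝ) ≤ Real.exp 1 := by linarith [Real.add_one_le_exp 1]
      have h4 : (4:ℝ) ≤ Real.exp 2 := by
        rw [show (2:ℝ) = 1+1 by norm_num, Real.exp_add]; nlinarith
      have he2 : Real.exp (-2) ≤ 1/4 := by
        rw [Real.exp_neg]
        have := inv_anti₀ (show (0:ℝ) < 4 by norm_num) h4
        linarith
      linarith
    set r : ℝ≥0∞ := ENNReal.ofReal (2*θ) with hr
    have hterm : ∀ n : ℕ, ((2:ℝ≥0∞)^n * d) *
        ENNReal.ofReal (2 * Real.exp (-(q*(72/49)^n*(m:ℝ)^2)))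
        ≤ (d:ℝ≥0∞) * ENNReal.ofReal (2*Real.exp (-(q*(m:ℝ)^2))) * r^n := by
      intro n
      have hber : 1 + (n:ℝ)*(23/49) ≤ ((72:ℝ)/49)^n := by
        have h := one_add_mul_le_pow (show (-2:ℝ) ≤ 23/49 by norm_num) n
        calc 1 + (n:ℝ)*(23/49) ≤ (1 + 23/49)^n := h
          _ = ((72:ℝ)/49)^n := by norm_num
      have hb : Real.exp (-(q*(72/49)^n*(m:ℝ)^2))
          ≤ Real.exp (-(q*(m:ℝ)^2)) * θ^n := by
        rw [hθ, ← Real.exp_nat_mul, ← Real.exp_add]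
        apply Real.exp_le_exp.2
        have hmul := mul_le_mul_of_nonneg_right hber
          (mul_nonneg hq0.le (sq_nonneg (m:ℝ)))
        nlinarith
      have e1 : ((2:ℝ≥0∞))^n = ENNReal.ofReal ((2:ℝ)^n) := by
        rw [ENNReal.ofReal_pow (by norm_num), ENNReal.ofReal_ofNat]
      calc ((2:ℝ≥0∞)^n * d) * ENNReal.ofReal (2 * Real.exp (-(q*(72/49)^n*(m:ℝ)^2)))
          ≤ ((2:ℝ≥0∞)^n * d) * ENNReal.ofReal (2 * (Real.exp (-(q*(m:ℝ)^2)) * θ^n)) :=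
            mul_le_mul_right (ENNReal.ofReal_le_ofReal (by nlinarith)) _
        _ = (d:ℝ≥0∞) * (ENNReal.ofReal ((2:ℝ)^n) *
              ENNReal.ofReal (2 * (Real.exp (-(q*(m:ℝ)^2)) * θ^n))) := by
            rw [e1]; ring
        _ = (d:ℝ≥0∞) * ENNReal.ofReal ((2:ℝ)^n * (2 * (Real.exp (-(q*(m:ℝ)^2)) * θ^n))) := by
            rw [← ENNReal.ofReal_mul (by positivity)]
        _ = (d:ℝ≥0∞) * ENNReal.ofReal ((2*Real.exp (-(q*(m:ℝ)^2))) * (2*θ)^n) := by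
            rw [mul_pow]; ring_nf
        _ = (d:ℝ≥0∞) * (ENNReal.ofReal (2*Real.exp (-(q*(m:ℝ)^2))) *
              ENNReal.ofReal ((2*θ)^n)) := by
            rw [← ENNReal.ofReal_mul (by positivity)]
        _ = (d:ℝ≥0∞) * ENNReal.ofReal (2*Real.exp (-(q*(m:ℝ)^2))) * r^n := by
            rw [hr, ← ENNReal.ofReal_pow (by positivity), mul_assoc]
    refine (ENNReal.tsum_le_tsum hterm).trans ?_
    rw [ENNReal.tsum_mul_left, ENNReal.tsum_geometric]
    have hrle : r ≤ 2⁻¹ := by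
      rw [hr, show ((2:ℝ≥0∞))⁻¹ = ENNReal.ofReal (1/2) by
        rw [ENNReal.ofReal_div_of_pos (by norm_num)]; simp]
      exact ENNReal.ofReal_le_ofReal hθle
    have hinv : (1 - r)⁻¹ ≤ 2 := by
      have h1 : (2:ℝ≥0∞)⁻¹ ≤ 1 - r := by
        rw [← ENNReal.one_sub_inv_two]
        exact tsub_le_tsub_left hrle 1
      calc (1 - r)⁻¹ ≤ ((2:ℝ≥0∞)⁻¹)⁻¹ := ENNReal.inv_le_inv' h1
        _ = 2 := inv_inv 2
    refine le_trans (mul_le_mul_right hinv _) ?_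
    rw [show ((d:ℝ≥0∞)) = ENNReal.ofReal (d:ℝ) by rw [ENNReal.ofReal_natCast],
      show ((2:ℝ≥0∞)) = ENNReal.ofReal (2:ℝ) by rw [ENNReal.ofReal_ofNat],
      ← ENNReal.ofReal_mul (by positivity), ← ENNReal.ofReal_mul (by positivity)]
    apply ENNReal.ofReal_le_ofReal
    nlinarith [Real.exp_pos (-(q*(m:ℝ)^2))]
  set f : Ω → ℝ≥0∞ := fun ω =>
    ENNReal.ofReal (Real.exp (-2 * t * ⨅ s : Set.Icc (0 : ℝ) t, g (W s ω))) with hf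
  set U : Set Ω := ⋃ m, Good m with hU
  have hUm : MeasurableSet U := MeasurableSet.iUnion hGoodMeas
  have hUc0 : P Uᶜ = 0 := by
    have hle : ∀ m : ℕ, M ≤ m →
        P Uᶜ ≤ ENNReal.ofReal (4*(d:ℝ)*Real.exp (-(q*(m:ℝ)^2))) := by
      intro m hm
      refine le_trans (measure_mono ?_) (hMtail m hm)
      intro ω hω
      simp only [hU, Set.mem_compl_iff, Set.mem_iUnion, not_exists] at hω ⊢
      exact hω m
    have htendR : Tendsto (fun m : ℕ => 4*(d:ℝ)*Real.exp (-(q*(m:ℝ)^2))) atTop (nhds 0) := by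
      have h2 : Tendsto (fun m : ℕ => (m:ℝ)) atTop atTop := tendsto_natCast_atTop_atTop
      have h3 : Tendsto (fun m : ℕ => (m:ℝ)^2) atTop atTop := by
        simpa [pow_two] using h2.atTop_mul_atTop₀ h2
      have h4 : Tendsto (fun m : ℕ => q*(m:ℝ)^2) atTop atTop := h3.const_mul_atTop hq0
      have h5 : Tendsto (fun m : ℕ => -(q*(m:ℝ)^2)) atTop atBot :=
        tendsto_neg_atTop_atBot.comp h4
      have h6 : Tendsto (fun m : ℕ => Real.exp (-(q*(m:ℝ)^2))) atTop (nhds 0) :=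
        Real.tendsto_exp_atBot.comp h5
      simpa using h6.const_mul (4*(d:ℝ))
    have htend : Tendsto (fun m : ℕ => ENNReal.ofReal (4*(d:ℝ)*Real.exp (-(q*(m:ℝ)^2))))
        atTop (nhds 0) := by
      rw [show (0:ℝ≥0∞) = ENNReal.ofReal 0 by simp]
      exact ENNReal.tendsto_ofReal htendR
    have hle0 := ge_of_tendsto htend (eventually_atTop.2 ⟨M, hle⟩)
    exact le_antisymm hle0 zero_le
  set F : ℕ → Set Ω := fun m => Nat.casesOn m (Good 0) (fun k => Good (k+1) \ Good k) with hF
  have hFm : ∀ m, MeasurableSet (F m) := by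
    intro m
    cases m with
    | zero => exact hGoodMeas 0
    | succ k => exact (hGoodMeas (k+1)).diff (hGoodMeas k)
  have hFsub : ∀ m, F m ⊆ Good m := by
    intro m
    cases m with
    | zero => exact subset_rfl
    | succ k => exact Set.diff_subset
  have hUF : U ⊆ ⋃ m, F m := by
    intro ω hω
    rw [hU] at hω
    have hex : ∃ m, ω ∈ Good m := Set.mem_iUnion.1 hω
    refine Set.mem_iUnion.2 ⟨Nat.find hex, ?_⟩
    have h1 : ω ∈ Good (Nat.find hex) := Nat.find_spec hex
    rcases hn : Nat.find hex with _ | k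
    · rw [hn] at h1; exact h1
    · rw [hn] at h1
      exact ⟨h1, Nat.find_min hex (by omega)⟩
  have hFbound : ∀ m : ℕ, ∫⁻ ω in F m, f ω ∂P
      ≤ ENNReal.ofReal (Real.exp (A + C*(m:ℝ))) * P (F m) := by
    intro m
    calc ∫⁻ ω in F m, f ω ∂P
        ≤ ∫⁻ _ω in F m, ENNReal.ofReal (Real.exp (A + C*(m:ℝ))) ∂P :=
          setLIntegral_mono measurable_const (fun ω hω => hfb m ω (hFsub m hω))
      _ = ENNReal.ofReal (Real.exp (A + C*(m:ℝ))) * P (F m) := setLIntegral_const _ _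
  have key : ∫⁻ ω, f ω ∂P ≤ ∑' m : ℕ, ENNReal.ofReal (Real.exp (A + C*(m:ℝ))) * P (F m) := by
    calc ∫⁻ ω, f ω ∂P = ∫⁻ ω in U, f ω ∂P + ∫⁻ ω in Uᶜ, f ω ∂P :=
          (lintegral_add_compl _ hUm).symm
      _ = ∫⁻ ω in U, f ω ∂P := by
          rw [setLIntegral_measure_zero _ _ hUc0, add_zero]
      _ ≤ ∫⁻ ω in ⋃ m, F m, f ω ∂P :=
          lintegral_mono' (Measure.restrict_mono hUF le_rfl) le_rfl
      _ ≤ ∑' m : ℕ, ∫⁻ ω in F m, f ω ∂P := lintegral_iUnion_le _ _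
      _ ≤ ∑' m : ℕ, ENNReal.ofReal (Real.exp (A + C*(m:ℝ))) * P (F m) :=
          ENNReal.tsum_le_tsum hFbound
  set v : ℕ → ℝ≥0∞ := fun m => if m < M+1 then ENNReal.ofReal (Real.exp (A + C*(m:ℝ))) else 0
    with hv
  set w : ℕ → ℝ≥0∞ := fun m =>
    ENNReal.ofReal (4*(d:ℝ)*Real.exp (A + C)) * (ENNReal.ofReal (Real.exp (-1)))^m with hw
  have hsummand : ∀ m : ℕ,
      ENNReal.ofReal (Real.exp (A + C*(m:ℝ))) * P (F m) ≤ v m + w m := by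
    intro m
    by_cases hmM : m < M+1
    · calc ENNReal.ofReal (Real.exp (A + C*(m:ℝ))) * P (F m)
          ≤ ENNReal.ofReal (Real.exp (A + C*(m:ℝ))) * 1 :=
            mul_le_mul_right prob_le_one _
        _ = v m := by rw [hv]; simp [hmM]
        _ ≤ v m + w m := le_self_add
    · push_neg at hmM
      obtain ⟨k, rfl⟩ : ∃ k, m = k + 1 := ⟨m - 1, by omega⟩
      have hkM : M ≤ k := by omega
      obtain ⟨hk1, hk2, hk3⟩ := hMge k hkM
      have hPF : P (F (k+1)) ≤ ENNReal.ofReal (4*(d:ℝ)*Real.exp (-(q*(k:ℝ)^2))) := by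
        refine le_trans (measure_mono ?_) (hMtail k hkM)
        exact fun ω hω => hω.2
      calc ENNReal.ofReal (Real.exp (A + C*((k+1:ℕ):ℝ))) * P (F (k+1))
          ≤ ENNReal.ofReal (Real.exp (A + C*((k+1:ℕ):ℝ))) *
              ENNReal.ofReal (4*(d:ℝ)*Real.exp (-(q*(k:ℝ)^2))) :=
            mul_le_mul_right hPF _
        _ = ENNReal.ofReal (Real.exp (A + C*((k+1:ℕ):ℝ)) *
              (4*(d:ℝ)*Real.exp (-(q*(k:ℝ)^2)))) := by
            rw [← ENNReal.ofReal_mul (by positivity)]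
        _ ≤ ENNReal.ofReal ((4*(d:ℝ)*Real.exp (A + C)) * Real.exp (-(1:ℝ))^(k+1)) := by
            apply ENNReal.ofReal_le_ofReal
            have hd0 : (0:ℝ) ≤ 4*(d:ℝ) := by positivity
            have hqk : (C+2)*(k:ℝ) ≤ q*(k:ℝ)^2 := by
              have : (C+2) ≤ q*(k:ℝ) := by
                rw [div_le_iff₀ hq0] at hk3
                nlinarith
              nlinarith
            have hexple : A + C*((k+1:ℕ):ℝ) + -(q*(k:ℝ)^2)
                ≤ A + C + ((k:ℕ)+1:ℝ)*(-1) := by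
              push_cast
              nlinarith
            calc Real.exp (A + C*((k+1:ℕ):ℝ)) * (4*(d:ℝ)*Real.exp (-(q*(k:ℝ)^2)))
                = 4*(d:ℝ) * Real.exp (A + C*((k+1:ℕ):ℝ) + -(q*(k:ℝ)^2)) := by
                  rw [Real.exp_add (A + C*((k+1:ℕ):ℝ)) (-(q*(k:ℝ)^2))]; ring
              _ ≤ 4*(d:ℝ) * Real.exp (A + C + ((k:ℕ)+1:ℝ)*(-1)) := by
                  apply mul_le_mul_of_nonneg_left ?_ hd0
                  exact Real.exp_le_exp.2 hexple
              _ = 4*(d:ℝ)*Real.exp (A+C) * Real.exp (((k:ℕ)+1:ℝ)*(-1)) := by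
                  rw [Real.exp_add (A+C) (((k:ℕ)+1:ℝ)*(-1))]; ring
              _ = 4*(d:ℝ)*Real.exp (A+C) * Real.exp (-(1:ℝ))^(k+1) := by
                  rw [← Real.exp_nat_mul]
                  norm_num
        _ = w (k+1) := by
            rw [hw, ENNReal.ofReal_mul (by positivity), ENNReal.ofReal_pow (by positivity)]
        _ ≤ v (k+1) + w (k+1) := le_add_self
  have hvsum : ∑' m, v m < ⊤ := by
    have : ∑' m, v m = ∑ m ∈ Finset.range (M+1), v m := by
      apply tsum_eq_sum
      intro b hb
      simp only [hv]
      rw [if_neg (by simpa [Finset.mem_range] using hb)]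
    rw [this]
    refine ENNReal.sum_lt_top.2 fun m _ => ?_
    simp only [hv]; split_ifs <;> simp [ENNReal.ofReal_lt_top]
  have hwsum : ∑' m, w m < ⊤ := by
    rw [hw]
    rw [ENNReal.tsum_mul_left, ENNReal.tsum_geometric]
    apply ENNReal.mul_lt_top ENNReal.ofReal_lt_top
    rw [ENNReal.inv_lt_top, tsub_pos_iff_lt]
    exact ENNReal.ofReal_lt_one.2 (Real.exp_lt_one_iff.2 (by norm_num))
  calc ∫⁻ ω, f ω ∂P ≤ ∑' m : ℕ, ENNReal.ofReal (Real.exp (A + C*(m:ℝ))) * P (F m) := key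
    _ ≤ ∑' m : ℕ, (v m + w m) := ENNReal.tsum_le_tsum hsummand
    _ = ∑' m, v m + ∑' m, w m := ENNReal.tsum_add
    _ < ⊤ := ENNReal.add_lt_top.2 ⟨hvsum, hwsum⟩
end
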